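/- arXiv:1901.02841 — 3 statements merged into one kernel-verified Lean document; each statement's English description precedes it below -/
import Mathlib

section
/- Let K>0 and let g,h,b:ℝ→ℝ be continuous with g(x)²+h(x)² ≤ K(1+|x|) and |b(x)| ≤ K(1+|x|) for all x∈ℝ. Let (μ_t)_{t≥0} be a weakly continuous family of Borel probability measures on ℝ such that for every f ∈ C_b²(ℝ) and every t ≥ 0, ⟨μ_t,f⟩ = ⟨μ_0,f⟩ + ∫_0^t ∫_ℝ b(x)f'(x) μ_s(dx) ds + ∫_0^t ∬_{ℝ²} Δf(x,y)·(g(x)²h(y)²+g(y)²h(x)²)/2 · μ_s(dx)μ_s(dy) ds. Then for every z ∈ ℂ with Im(z) > 0, the map t ↦ ∫_ℝ (x−z)^{-1} μ_t(dx) is differentiable on (0,∞) and d/dt ∫_ℝ (x−z)^{-1} μ_t(dx) = −∫_ℝ b(x)(x−z)^{-2} μ_t(dx) + (∫_ℝ g(x)²(x−z)^{-1} μ_t(dx))(∫_ℝ h(y)²(y−z)^{-2} μ_t(dy)) + (∫_ℝ g(x)²(x−z)^{-2} μ_t(dx))(∫_ℝ h(y)²(y−z)^{-1} μ_t(dy)).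 -/
open MeasureTheory Filter Set

/-- The difference quotient of the derivative: `Δf(x,y) = (f'(x)-f'(y))/(x-y)` for `x ≠ y`,
and `Δf(x,x) = f''(x)`. -/
noncomputable def deltaF (f : ℝ → ℝ) (x y : ℝ) : ℝ :=
  if x = y then deriv (deriv f) x else (deriv f x - deriv f y) / (x - y)

/-- `C_b²(ℝ)`: twice continuously differentiable with `f`, `f'`, `f''` bounded. -/
def CbTwo (f : ℝ → ℝ) : Prop :=
  ContDiff ℝ 2 f ∧ ∃ C : ℝ, ∀ x : ℝ,
    |f x| ≤ C ∧ |deriv f x| ≤ C ∧ |deriv (deriv f) x| ≤ C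


lemma res_ne {z : ℂ} (hz : 0 < z.im) (x : ℝ) : ((x:ℂ) - z) ≠ 0 := by
  intro hx
  have : ((x:ℂ) - z).im = 0 := by rw [hx]; simp
  simp [Complex.sub_im] at this
  linarith

lemma norm_res_ge {z : ℂ} (hz : 0 < z.im) (x : ℝ) : z.im ≤ ‖(x:ℂ) - z‖ := by
  have h1 : z.im ≤ |((x:ℂ) - z).im| := by
    simp only [Complex.sub_im, Complex.ofReal_im, zero_sub, abs_neg]
    exact le_abs_self _
  exact h1.trans (by exact Complex.abs_im_le_norm _)

lemma norm_res_le {z : ℂ} (hz : 0 < z.im) (x : ℝ) : ‖((x:ℂ) - z)⁻¹‖ ≤ (z.im)⁻¹ := by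
  rw [norm_inv]
  exact inv_anti₀ hz (norm_res_ge hz x)

lemma res_growth {z : ℂ} (hz : 0 < z.im) (x : ℝ) :
    (1 + |x|) * ‖((x:ℂ) - z)⁻¹‖ ≤ (1 + ‖z‖) * (1 + (z.im)⁻¹) := by
  have hne := res_ne hz x
  have hpos : (0:ℝ) < ‖(x:ℂ) - z‖ := norm_pos_iff.2 hne
  have h2 : 1 + |x| ≤ 1 + ‖z‖ + ‖(x:ℂ) - z‖ := by
    have h1 : |x| = ‖(x:ℂ)‖ := by simp
    have : ‖(x:ℂ)‖ - ‖z‖ ≤ ‖(x:ℂ) - z‖ := norm_sub_norm_le _ _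
    linarith
  have him : ‖(x:ℂ) - z‖⁻¹ ≤ z.im⁻¹ := by
    have := norm_res_le hz x; rwa [norm_inv] at this
  rw [norm_inv]
  have hz' : (0:ℝ) < z.im⁻¹ := by positivity
  have hzn : (0:ℝ) ≤ ‖z‖ := norm_nonneg _
  have hi : (0:ℝ) < ‖(x:ℂ) - z‖⁻¹ := by positivity
  calc (1 + |x|) * ‖(x:ℂ) - z‖⁻¹ ≤ (1 + ‖z‖ + ‖(x:ℂ) - z‖) * ‖(x:ℂ) - z‖⁻¹ := by
        apply mul_le_mul_of_nonneg_right h2 (by positivity)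
    _ = (1 + ‖z‖) * ‖(x:ℂ) - z‖⁻¹ + 1 := by rw [add_mul, mul_inv_cancel₀ hpos.ne']
    _ ≤ (1 + ‖z‖) * z.im⁻¹ + 1 := by nlinarith
    _ ≤ (1 + ‖z‖) * (1 + z.im⁻¹) := by nlinarith

lemma hasDerivAt_res {z : ℂ} (hz : 0 < z.im) (x : ℝ) :
    HasDerivAt (fun x : ℝ => ((x:ℂ) - z)⁻¹) (-((((x:ℂ) - z))^2)⁻¹) x := by
  have h1 : HasDerivAt (fun w : ℂ => (w - z)⁻¹) (-((((x:ℂ) - z))^2)⁻¹) ((x:ℂ)) := by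
    have := ((hasDerivAt_id ((x:ℂ))).sub_const z).fun_inv (res_ne hz x)
    refine this.congr_deriv ?_
    simp
    ring
  exact h1.comp_ofReal

lemma hasDerivAt_res2 {z : ℂ} (hz : 0 < z.im) (x : ℝ) :
    HasDerivAt (fun x : ℝ => -((((x:ℂ) - z))^2)⁻¹) (2 * ((((x:ℂ) - z))^3)⁻¹) x := by
  have h1 : HasDerivAt (fun w : ℂ => -((w - z)^2)⁻¹) (2 * ((((x:ℂ) - z))^3)⁻¹) ((x:ℂ)) := by
    have h2 : HasDerivAt (fun w : ℂ => (w - z)^2) (2 * ((x:ℂ) - z)) ((x:ℂ)) := by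
      simpa using ((hasDerivAt_id ((x:ℂ))).sub_const z).fun_pow 2
    have hne : ((x:ℂ) - z)^2 ≠ 0 := pow_ne_zero _ (res_ne hz x)
    have := (h2.fun_inv hne).neg
    refine this.congr_deriv ?_
    have := res_ne hz x
    field_simp
  exact h1.comp_ofReal

lemma contDiff_res {z : ℂ} (hz : 0 < z.im) :
    ContDiff ℝ 2 (fun x : ℝ => ((x:ℂ) - z)⁻¹) :=
  (Complex.ofRealCLM.contDiff.sub contDiff_const).inv (res_ne hz)

lemma deriv_fL {z : ℂ} (hz : 0 < z.im) (L : ℂ →L[ℝ] ℝ) :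
    deriv (fun x : ℝ => L (((x:ℂ) - z)⁻¹)) =
    fun x : ℝ => L (-((((x:ℂ) - z))^2)⁻¹) := by
  funext x
  exact (L.hasFDerivAt.comp_hasDerivAt x (hasDerivAt_res hz x)).deriv

lemma deriv2_fL {z : ℂ} (hz : 0 < z.im) (L : ℂ →L[ℝ] ℝ) :
    deriv (deriv (fun x : ℝ => L (((x:ℂ) - z)⁻¹))) =
    fun x : ℝ => L (2 * ((((x:ℂ) - z))^3)⁻¹) := by
  rw [deriv_fL hz L]
  funext x
  exact (L.hasFDerivAt.comp_hasDerivAt x (hasDerivAt_res2 hz x)).deriv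

lemma contDiff_fL {z : ℂ} (hz : 0 < z.im) (L : ℂ →L[ℝ] ℝ) :
    ContDiff ℝ 2 (fun x : ℝ => L (((x:ℂ) - z)⁻¹)) :=
  L.contDiff.comp (contDiff_res hz)

lemma norm_res_pow_le {z : ℂ} (hz : 0 < z.im) (x : ℝ) (n : ℕ) :
    ‖((((x:ℂ) - z))^n)⁻¹‖ ≤ ((z.im)⁻¹)^n := by
  rw [← inv_pow, norm_pow]
  exact pow_le_pow_left₀ (norm_nonneg _) (norm_res_le hz x) n

lemma cbTwo_fL {z : ℂ} (hz : 0 < z.im) (L : ℂ →L[ℝ] ℝ) (hL : ∀ w : ℂ, |L w| ≤ ‖w‖) :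
    CbTwo (fun x : ℝ => L (((x:ℂ) - z)⁻¹)) := by
  refine ⟨contDiff_fL hz L, (z.im)⁻¹ + ((z.im)⁻¹)^2 + 2 * ((z.im)⁻¹)^3, fun x => ?_⟩
  have h0 : (0:ℝ) ≤ (z.im)⁻¹ := by positivity
  have b1 : |L (((x:ℂ) - z)⁻¹)| ≤ (z.im)⁻¹ := (hL _).trans (norm_res_le hz x)
  have b2 : |L (-((((x:ℂ) - z))^2)⁻¹)| ≤ ((z.im)⁻¹)^2 := by
    refine (hL _).trans ?_
    rw [norm_neg]; exact norm_res_pow_le hz x 2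
  have b3 : |L (2 * ((((x:ℂ) - z))^3)⁻¹)| ≤ 2 * ((z.im)⁻¹)^3 := by
    refine (hL _).trans ?_
    rw [norm_mul]
    simp only [Complex.norm_ofNat]
    have := norm_res_pow_le hz x 3
    nlinarith [norm_nonneg (((((x:ℂ) - z))^3)⁻¹)]
  rw [deriv2_fL hz L, deriv_fL hz L]
  refine ⟨?_, ?_, ?_⟩
  · nlinarith [abs_nonneg (L (-((((x:ℂ) - z))^2)⁻¹)), sq_nonneg ((z.im)⁻¹)]
  · nlinarith [pow_nonneg h0 3]
  · nlinarith [sq_nonneg ((z.im)⁻¹)]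

lemma deltaF_fL {z : ℂ} (hz : 0 < z.im) (L : ℂ →L[ℝ] ℝ) (x y : ℝ) :
    deltaF (fun x : ℝ => L (((x:ℂ) - z)⁻¹)) x y =
    L (((x:ℂ) - z)⁻¹ * ((((y:ℂ) - z))^2)⁻¹ + ((((x:ℂ) - z))^2)⁻¹ * ((y:ℂ) - z)⁻¹) := by
  unfold deltaF
  by_cases hxy : x = y
  · subst hxy
    rw [if_pos rfl, deriv2_fL hz L]
    have hc := res_ne hz x
    have harg : (2:ℂ) * ((((x:ℂ) - z))^3)⁻¹ =
        ((x:ℂ) - z)⁻¹ * ((((x:ℂ) - z))^2)⁻¹ + ((((x:ℂ) - z))^2)⁻¹ * ((x:ℂ) - z)⁻¹ := by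
      field_simp
      ring
    beta_reduce
    rw [harg]
  · rw [if_neg hxy, deriv_fL hz L]
    have hsub : (x - y : ℝ) ≠ 0 := sub_ne_zero.2 hxy
    rw [← L.map_sub, div_eq_inv_mul, ← smul_eq_mul, ← L.map_smul]
    congr 1
    have hx := res_ne hz x
    have hy := res_ne hz y
    have hxyC : ((x:ℂ)) - ((y:ℂ)) ≠ 0 := by
      simpa using (Complex.ofReal_ne_zero.2 hsub)
    rw [Complex.real_smul]
    push_cast
    field_simp
    ring

lemma integrable_of_bdd {f : ℝ → ℂ} (μ : Measure ℝ) [IsProbabilityMeasure μ]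
    (hf : Continuous f) (C : ℝ) (hC : ∀ x, ‖f x‖ ≤ C) : Integrable f μ :=
  (integrable_const C).mono' hf.aestronglyMeasurable (Eventually.of_forall hC)

lemma cont_param (μ : ℝ → Measure ℝ) (hprob : ∀ t, IsProbabilityMeasure (μ t))
    (hweakcont : ∀ f : ℝ → ℝ, Continuous f → (∃ C : ℝ, ∀ x, |f x| ≤ C) →
      Continuous fun t : ℝ => ∫ x, f x ∂(μ t))
    (f : ℝ → ℂ) (hf : Continuous f) (C : ℝ) (hC : ∀ x, ‖f x‖ ≤ C) :
    Continuous fun s => ∫ x, f x ∂ μ s := by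
  have hint : ∀ s, Integrable f (μ s) := fun s => by
    haveI := hprob s; exact integrable_of_bdd (μ s) hf C hC
  have hfun : (fun s => ∫ x, f x ∂ μ s)
      = fun s => ((∫ x, (f x).re ∂ μ s : ℝ) : ℂ) + ((∫ x, (f x).im ∂ μ s : ℝ) : ℂ) * Complex.I := by
    funext s
    rw [← integral_re_add_im (hint s)]
    simp [RCLike.re_to_complex, RCLike.im_to_complex]
  rw [hfun]
  have hre : Continuous fun s => ∫ x, (f x).re ∂ μ s := by
    apply hweakcont _ (Complex.continuous_re.comp hf)
    exact ⟨C, fun x => (Complex.abs_re_le_norm (f x)).trans (hC x)⟩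
  have him : Continuous fun s => ∫ x, (f x).im ∂ μ s := by
    apply hweakcont _ (Complex.continuous_im.comp hf)
    exact ⟨C, fun x => (Complex.abs_im_le_norm (f x)).trans (hC x)⟩
  exact (Complex.continuous_ofReal.comp hre).add
    ((Complex.continuous_ofReal.comp him).mul continuous_const)

lemma cont_res {z : ℂ} (hz : 0 < z.im) : Continuous fun x : ℝ => ((x:ℂ) - z)⁻¹ :=
  (Complex.continuous_ofReal.sub continuous_const).inv₀ (res_ne hz)

lemma cont_res2 {z : ℂ} (hz : 0 < z.im) : Continuous fun x : ℝ => (((x:ℂ) - z)^2)⁻¹ :=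
  ((Complex.continuous_ofReal.sub continuous_const).pow 2).inv₀
    (fun x => pow_ne_zero _ (res_ne hz x))

lemma cont_w1 {z : ℂ} (hz : 0 < z.im) {c : ℝ → ℝ} (hc : Continuous c) :
    Continuous fun x : ℝ => ((c x : ℂ))^2 * ((x:ℂ) - z)⁻¹ :=
  ((Complex.continuous_ofReal.comp hc).pow 2).mul (cont_res hz)

lemma cont_w2 {z : ℂ} (hz : 0 < z.im) {c : ℝ → ℝ} (hc : Continuous c) :
    Continuous fun x : ℝ => ((c x : ℂ))^2 * (((x:ℂ) - z)^2)⁻¹ :=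
  ((Complex.continuous_ofReal.comp hc).pow 2).mul (cont_res2 hz)

lemma cont_wb {z : ℂ} (hz : 0 < z.im) {c : ℝ → ℝ} (hc : Continuous c) :
    Continuous fun x : ℝ => ((c x : ℂ)) * (((x:ℂ) - z)^2)⁻¹ :=
  (Complex.continuous_ofReal.comp hc).mul (cont_res2 hz)

lemma norm_res2_le {z : ℂ} (hz : 0 < z.im) (x : ℝ) :
    ‖(((x:ℂ) - z)^2)⁻¹‖ ≤ (z.im)⁻¹ * ‖((x:ℂ) - z)⁻¹‖ := by
  rw [← inv_pow, norm_pow, sq]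
  exact mul_le_mul_of_nonneg_right (norm_res_le hz x) (norm_nonneg _)

lemma bdd_w1 {K : ℝ} (hK : 0 < K) {z : ℂ} (hz : 0 < z.im) {c : ℝ → ℝ}
    (hc : ∀ x, c x ^ 2 ≤ K * (1 + |x|)) (x : ℝ) :
    ‖((c x : ℂ))^2 * ((x:ℂ) - z)⁻¹‖ ≤ K * ((1 + ‖z‖) * (1 + (z.im)⁻¹)) := by
  rw [norm_mul, norm_pow, Complex.norm_real, Real.norm_eq_abs, sq_abs]
  calc c x ^ 2 * ‖((x:ℂ) - z)⁻¹‖ ≤ (K * (1 + |x|)) * ‖((x:ℂ) - z)⁻¹‖ :=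
        mul_le_mul_of_nonneg_right (hc x) (norm_nonneg _)
    _ = K * ((1 + |x|) * ‖((x:ℂ) - z)⁻¹‖) := by ring
    _ ≤ _ := mul_le_mul_of_nonneg_left (res_growth hz x) hK.le

lemma bdd_w2 {K : ℝ} (hK : 0 < K) {z : ℂ} (hz : 0 < z.im) {c : ℝ → ℝ}
    (hc : ∀ x, c x ^ 2 ≤ K * (1 + |x|)) (x : ℝ) :
    ‖((c x : ℂ))^2 * (((x:ℂ) - z)^2)⁻¹‖ ≤ (z.im)⁻¹ * (K * ((1 + ‖z‖) * (1 + (z.im)⁻¹))) := by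
  rw [norm_mul]
  have h1 : ‖((c x:ℂ))^2‖ * ‖(((x:ℂ) - z)^2)⁻¹‖ ≤ ‖((c x:ℂ))^2‖ * ((z.im)⁻¹ * ‖((x:ℂ) - z)⁻¹‖) :=
    mul_le_mul_of_nonneg_left (norm_res2_le hz x) (norm_nonneg _)
  refine h1.trans ?_
  have h2 := bdd_w1 hK hz hc x
  rw [norm_mul] at h2
  have h0 : (0:ℝ) ≤ (z.im)⁻¹ := by positivity
  calc ‖((c x:ℂ))^2‖ * ((z.im)⁻¹ * ‖((x:ℂ) - z)⁻¹‖)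
      = (z.im)⁻¹ * (‖((c x:ℂ))^2‖ * ‖((x:ℂ) - z)⁻¹‖) := by ring
    _ ≤ _ := mul_le_mul_of_nonneg_left h2 h0

lemma bdd_wb {K : ℝ} (hK : 0 < K) {z : ℂ} (hz : 0 < z.im) {c : ℝ → ℝ}
    (hc : ∀ x, |c x| ≤ K * (1 + |x|)) (x : ℝ) :
    ‖((c x : ℂ)) * (((x:ℂ) - z)^2)⁻¹‖ ≤ (z.im)⁻¹ * (K * ((1 + ‖z‖) * (1 + (z.im)⁻¹))) := by
  rw [norm_mul]
  have h1 : ‖((c x:ℂ))‖ * ‖(((x:ℂ) - z)^2)⁻¹‖ ≤ ‖((c x:ℂ))‖ * ((z.im)⁻¹ * ‖((x:ℂ) - z)⁻¹‖) :=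
    mul_le_mul_of_nonneg_left (norm_res2_le hz x) (norm_nonneg _)
  refine h1.trans ?_
  have h0 : (0:ℝ) ≤ (z.im)⁻¹ := by positivity
  have h2 : ‖((c x:ℂ))‖ * ‖((x:ℂ) - z)⁻¹‖ ≤ K * ((1 + ‖z‖) * (1 + (z.im)⁻¹)) := by
    rw [Complex.norm_real, Real.norm_eq_abs]
    calc |c x| * ‖((x:ℂ) - z)⁻¹‖ ≤ (K * (1 + |x|)) * ‖((x:ℂ) - z)⁻¹‖ :=
          mul_le_mul_of_nonneg_right (hc x) (norm_nonneg _)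
      _ = K * ((1 + |x|) * ‖((x:ℂ) - z)⁻¹‖) := by ring
      _ ≤ _ := mul_le_mul_of_nonneg_left (res_growth hz x) hK.le
  calc ‖((c x:ℂ))‖ * ((z.im)⁻¹ * ‖((x:ℂ) - z)⁻¹‖)
      = (z.im)⁻¹ * (‖((c x:ℂ))‖ * ‖((x:ℂ) - z)⁻¹‖) := by ring
    _ ≤ _ := mul_le_mul_of_nonneg_left h2 h0

noncomputable def momI (c : ℝ → ℝ) (z : ℂ) (μ : Measure ℝ) : ℂ :=
  ∫ x : ℝ, ((c x : ℂ))^2 * ((x:ℂ) - z)⁻¹ ∂μ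
noncomputable def momII (c : ℝ → ℝ) (z : ℂ) (μ : Measure ℝ) : ℂ :=
  ∫ x : ℝ, ((c x : ℂ))^2 * (((x:ℂ) - z)^2)⁻¹ ∂μ
noncomputable def momB (bf : ℝ → ℝ) (z : ℂ) (μ : Measure ℝ) : ℂ :=
  ∫ x : ℝ, ((bf x : ℂ)) * (((x:ℂ) - z)^2)⁻¹ ∂μ
noncomputable def momR (z : ℂ) (μ : Measure ℝ) : ℂ :=
  ∫ x : ℝ, ((x:ℂ) - z)⁻¹ ∂μ

section core

lemma bterm {K : ℝ} (hK : 0 < K) {z : ℂ} (hz : 0 < z.im)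
    {b : ℝ → ℝ} (hb : Continuous b)
    (μ : Measure ℝ) [IsProbabilityMeasure μ] (L : ℂ →L[ℝ] ℝ)
    (hbb : ∀ x : ℝ, |b x| ≤ K * (1 + |x|)) :
    ∫ x, b x * deriv (fun x : ℝ => L (((x:ℂ) - z)⁻¹)) x ∂μ = L (-(momB b z μ)) := by
  rw [deriv_fL hz L]
  have hpt : ∀ x : ℝ, b x * L (-((((x:ℂ) - z))^2)⁻¹)
      = L (-(((b x : ℂ)) * (((x:ℂ) - z)^2)⁻¹)) := by
    intro x
    rw [← smul_eq_mul, ← L.map_smul]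
    congr 1
    rw [Complex.real_smul]
    ring
  simp only [hpt]
  have hint : Integrable (fun x : ℝ => -(((b x : ℂ)) * (((x:ℂ) - z)^2)⁻¹)) μ := by
    refine (integrable_of_bdd μ (cont_wb hz hb) ((z.im)⁻¹ * (K * ((1 + ‖z‖) * (1 + (z.im)⁻¹))))
      fun x => ?_).neg'
    exact bdd_wb hK hz hbb x
  have hint' : Integrable (fun x : ℝ => ((b x : ℂ)) * (((x:ℂ) - z)^2)⁻¹) μ := by
    simpa using hint.neg'
  rw [L.integral_comp_comm hint, integral_neg]
  rfl

lemma qterm {K : ℝ} (hK : 0 < K) {z : ℂ} (hz : 0 < z.im)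
    {g h : ℝ → ℝ} (hg : Continuous g) (hh : Continuous h)
    (μ : Measure ℝ) [IsProbabilityMeasure μ] (L : ℂ →L[ℝ] ℝ)
    (hgh : ∀ x : ℝ, g x ^ 2 + h x ^ 2 ≤ K * (1 + |x|)) :
    ∫ x, ∫ y, deltaF (fun x : ℝ => L (((x:ℂ) - z)⁻¹)) x y
        * (g x ^ 2 * h y ^ 2 + g y ^ 2 * h x ^ 2) / 2 ∂μ ∂μ
      = L (momI g z μ * momII h z μ + momII g z μ * momI h z μ) := by
  have hgb : ∀ x, g x ^ 2 ≤ K * (1 + |x|) := fun x => by nlinarith [sq_nonneg (h x), hgh x]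
  have hhb : ∀ x, h x ^ 2 ≤ K * (1 + |x|) := fun x => by nlinarith [sq_nonneg (g x), hgh x]
  set Ag : ℝ → ℂ := fun x => ((g x : ℂ))^2 * ((x:ℂ) - z)⁻¹ with hAg
  set A2g : ℝ → ℂ := fun x => ((g x : ℂ))^2 * (((x:ℂ) - z)^2)⁻¹ with hA2g
  set Ah : ℝ → ℂ := fun x => ((h x : ℂ))^2 * ((x:ℂ) - z)⁻¹ with hAh
  set A2h : ℝ → ℂ := fun x => ((h x : ℂ))^2 * (((x:ℂ) - z)^2)⁻¹ with hA2h
  have iAg : Integrable Ag μ :=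
    integrable_of_bdd μ (cont_w1 hz hg) _ (bdd_w1 hK hz hgb)
  have iAh : Integrable Ah μ :=
    integrable_of_bdd μ (cont_w1 hz hh) _ (bdd_w1 hK hz hhb)
  have iA2g : Integrable A2g μ :=
    integrable_of_bdd μ (cont_w2 hz hg) _ (bdd_w2 hK hz hgb)
  have iA2h : Integrable A2h μ :=
    integrable_of_bdd μ (cont_w2 hz hh) _ (bdd_w2 hK hz hhb)
  have hpt : ∀ x y : ℝ, deltaF (fun x : ℝ => L (((x:ℂ) - z)⁻¹)) x y
      * (g x ^ 2 * h y ^ 2 + g y ^ 2 * h x ^ 2) / 2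
      = L ((Ag x * A2h y + Ah x * A2g y + A2g x * Ah y + A2h x * Ag y) / 2) := by
    intro x y
    rw [deltaF_fL hz L x y, mul_comm, ← smul_eq_mul, div_eq_inv_mul, ← smul_eq_mul,
      ← L.map_smul, ← L.map_smul]
    congr 1
    rw [Complex.real_smul, Complex.real_smul, hAg, hA2g, hAh, hA2h]
    push_cast
    ring
  have hinner : ∀ x : ℝ, ∫ y, (Ag x * A2h y + Ah x * A2g y + A2g x * Ah y + A2h x * Ag y) / 2 ∂μ
      = (Ag x * momII h z μ + Ah x * momII g z μ + A2g x * momI h z μ + A2h x * momI g z μ) / 2 := by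
    intro x
    rw [integral_div]
    congr 1
    have e1 : (∫ y, Ag x * A2h y + Ah x * A2g y + A2g x * Ah y + A2h x * Ag y ∂μ)
        = (∫ y, Ag x * A2h y + Ah x * A2g y + A2g x * Ah y ∂μ) + ∫ y, A2h x * Ag y ∂μ :=
      integral_add (((iA2h.const_mul _).add (iA2g.const_mul _)).add (iAh.const_mul _))
        (iAg.const_mul _)
    have e2 : (∫ y, Ag x * A2h y + Ah x * A2g y + A2g x * Ah y ∂μ)
        = (∫ y, Ag x * A2h y + Ah x * A2g y ∂μ) + ∫ y, A2g x * Ah y ∂μ :=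
      integral_add ((iA2h.const_mul _).add (iA2g.const_mul _)) (iAh.const_mul _)
    have e3 : (∫ y, Ag x * A2h y + Ah x * A2g y ∂μ)
        = (∫ y, Ag x * A2h y ∂μ) + ∫ y, Ah x * A2g y ∂μ :=
      integral_add (iA2h.const_mul _) (iA2g.const_mul _)
    rw [e1, e2, e3, integral_const_mul, integral_const_mul, integral_const_mul, integral_const_mul]
    rfl
  have hinteg_inner : Integrable (fun x : ℝ =>
      (Ag x * momII h z μ + Ah x * momII g z μ + A2g x * momI h z μ + A2h x * momI g z μ) / 2) μ := by
    exact ((((iAg.mul_const _).add (iAh.mul_const _)).add (iA2g.mul_const _)).add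
      (iA2h.mul_const _)).div_const _
  calc ∫ x, ∫ y, deltaF (fun x : ℝ => L (((x:ℂ) - z)⁻¹)) x y
        * (g x ^ 2 * h y ^ 2 + g y ^ 2 * h x ^ 2) / 2 ∂μ ∂μ
      = ∫ x, ∫ y, L ((Ag x * A2h y + Ah x * A2g y + A2g x * Ah y + A2h x * Ag y) / 2) ∂μ ∂μ := by
        simp only [hpt]
    _ = ∫ x, L ((Ag x * momII h z μ + Ah x * momII g z μ + A2g x * momI h z μ + A2h x * momI g z μ) / 2) ∂μ := by
        congr 1
        funext x
        have hint : Integrable (fun y : ℝ =>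
            (Ag x * A2h y + Ah x * A2g y + A2g x * Ah y + A2h x * Ag y) / 2) μ :=
          ((((iA2h.const_mul _).add (iA2g.const_mul _)).add (iAh.const_mul _)).add
            (iAg.const_mul _)).div_const _
        rw [L.integral_comp_comm hint, hinner x]
    _ = L (∫ x, (Ag x * momII h z μ + Ah x * momII g z μ + A2g x * momI h z μ + A2h x * momI g z μ) / 2 ∂μ) := by
        rw [L.integral_comp_comm hinteg_inner]
    _ = L (momI g z μ * momII h z μ + momII g z μ * momI h z μ) := by
        congr 1
        rw [integral_div]
        have e1 : (∫ x, Ag x * momII h z μ + Ah x * momII g z μ + A2g x * momI h z μ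
              + A2h x * momI g z μ ∂μ)
            = (∫ x, Ag x * momII h z μ + Ah x * momII g z μ + A2g x * momI h z μ ∂μ)
              + ∫ x, A2h x * momI g z μ ∂μ :=
          integral_add (((iAg.mul_const _).add (iAh.mul_const _)).add (iA2g.mul_const _))
            (iA2h.mul_const _)
        have e2 : (∫ x, Ag x * momII h z μ + Ah x * momII g z μ + A2g x * momI h z μ ∂μ)
            = (∫ x, Ag x * momII h z μ + Ah x * momII g z μ ∂μ) + ∫ x, A2g x * momI h z μ ∂μ :=
          integral_add ((iAg.mul_const _).add (iAh.mul_const _)) (iA2g.mul_const _)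
        have e3 : (∫ x, Ag x * momII h z μ + Ah x * momII g z μ ∂μ)
            = (∫ x, Ag x * momII h z μ ∂μ) + ∫ x, Ah x * momII g z μ ∂μ :=
          integral_add (iAg.mul_const _) (iAh.mul_const _)
        rw [e1, e2, e3, integral_mul_const, integral_mul_const, integral_mul_const,
          integral_mul_const]
        show (momI g z μ * momII h z μ + momI h z μ * momII g z μ + momII g z μ * momI h z μ
          + momII h z μ * momI g z μ) / 2 = _
        ring

lemma rterm {z : ℂ} (hz : 0 < z.im)
    (μ : Measure ℝ) [IsProbabilityMeasure μ] (L : ℂ →L[ℝ] ℝ) : ∫ x, L (((x:ℂ) - z)⁻¹) ∂μ = L (momR z μ) := by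
  have hint : Integrable (fun x : ℝ => ((x:ℂ) - z)⁻¹) μ := by
    refine integrable_of_bdd μ ?_ ((z.im)⁻¹) (norm_res_le hz)
    exact (Complex.continuous_ofReal.sub continuous_const).inv₀ (res_ne hz)
  exact L.integral_comp_comm hint

end core

theorem stmt2 (K : ℝ) (hK : 0 < K)
    (g h b : ℝ → ℝ) (hg : Continuous g) (hh : Continuous h) (hb : Continuous b)
    (hgh : ∀ x : ℝ, g x ^ 2 + h x ^ 2 ≤ K * (1 + |x|))
    (hbb : ∀ x : ℝ, |b x| ≤ K * (1 + |x|))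
    (μ : ℝ → Measure ℝ) (hprob : ∀ t, IsProbabilityMeasure (μ t))
    -- weak continuity of the family `(μ t)`
    (hweakcont : ∀ f : ℝ → ℝ, Continuous f → (∃ C : ℝ, ∀ x, |f x| ≤ C) →
      Continuous fun t : ℝ => ∫ x, f x ∂(μ t))
    -- the limiting integral equation (β = 2, Hermitian case)
    (heq : ∀ f : ℝ → ℝ, CbTwo f → ∀ t : ℝ, 0 ≤ t →
      ∫ x, f x ∂(μ t) = ∫ x, f x ∂(μ 0)
        + (∫ s in (0:ℝ)..t, ∫ x, b x * deriv f x ∂(μ s))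
        + ∫ s in (0:ℝ)..t, ∫ x, ∫ y,
            deltaF f x y * (g x ^ 2 * h y ^ 2 + g y ^ 2 * h x ^ 2) / 2 ∂(μ s) ∂(μ s)) :
    ∀ z : ℂ, 0 < z.im → ∀ t : ℝ, 0 < t →
      HasDerivAt (fun τ : ℝ => ∫ x : ℝ, ((x : ℂ) - z)⁻¹ ∂(μ τ))
        (-(∫ x : ℝ, (b x : ℂ) * (((x : ℂ) - z) ^ 2)⁻¹ ∂(μ t))
          + (∫ x : ℝ, ((g x : ℂ)) ^ 2 * ((x : ℂ) - z)⁻¹ ∂(μ t))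
            * (∫ y : ℝ, ((h y : ℂ)) ^ 2 * (((y : ℂ) - z) ^ 2)⁻¹ ∂(μ t))
          + (∫ x : ℝ, ((g x : ℂ)) ^ 2 * (((x : ℂ) - z) ^ 2)⁻¹ ∂(μ t))
            * (∫ y : ℝ, ((h y : ℂ)) ^ 2 * ((y : ℂ) - z)⁻¹ ∂(μ t))) t := by
  intro z hz t ht
  have hgb : ∀ x, g x ^ 2 ≤ K * (1 + |x|) := fun x => by nlinarith [sq_nonneg (h x), hgh x]
  have hhb : ∀ x, h x ^ 2 ≤ K * (1 + |x|) := fun x => by nlinarith [sq_nonneg (g x), hgh x]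
  -- continuity of the moment functions
  have hcIg : Continuous fun s => momI g z (μ s) :=
    cont_param μ hprob hweakcont _ (cont_w1 hz hg) _ (bdd_w1 hK hz hgb)
  have hcIh : Continuous fun s => momI h z (μ s) :=
    cont_param μ hprob hweakcont _ (cont_w1 hz hh) _ (bdd_w1 hK hz hhb)
  have hcIIg : Continuous fun s => momII g z (μ s) :=
    cont_param μ hprob hweakcont _ (cont_w2 hz hg) _ (bdd_w2 hK hz hgb)
  have hcIIh : Continuous fun s => momII h z (μ s) :=
    cont_param μ hprob hweakcont _ (cont_w2 hz hh) _ (bdd_w2 hK hz hhb)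
  have hcB : Continuous fun s => momB b z (μ s) :=
    cont_param μ hprob hweakcont _ (cont_wb hz hb) _ (bdd_wb hK hz hbb)
  set G : ℝ → ℂ := fun s => -(momB b z (μ s))
    + (momI g z (μ s) * momII h z (μ s) + momII g z (μ s) * momI h z (μ s)) with hGdef
  have hcG : Continuous G := by
    refine (hcB.neg).add ((hcIg.mul hcIIh).add (hcIIg.mul hcIh))
  -- the key integral equation for each linear functional
  have key : ∀ L : ℂ →L[ℝ] ℝ, (∀ w : ℂ, |L w| ≤ ‖w‖) → ∀ τ : ℝ, 0 ≤ τ →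
      L (momR z (μ τ)) = L (momR z (μ 0)) + ∫ s in (0:ℝ)..τ, L (G s) := by
    intro L hL τ hτ
    have hthis := heq (fun x => L (((x:ℂ) - z)⁻¹)) (cbTwo_fL hz L hL) τ hτ
    have hb' : ∀ s : ℝ, (∫ x, b x * deriv (fun x : ℝ => L (((x:ℂ) - z)⁻¹)) x ∂ μ s)
        = L (-(momB b z (μ s))) := fun s => by
      haveI := hprob s; exact bterm hK hz hb (μ s) L hbb
    have hq' : ∀ s : ℝ, (∫ x, ∫ y, deltaF (fun x : ℝ => L (((x:ℂ) - z)⁻¹)) x y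
          * (g x ^ 2 * h y ^ 2 + g y ^ 2 * h x ^ 2) / 2 ∂ μ s ∂ μ s)
        = L (momI g z (μ s) * momII h z (μ s) + momII g z (μ s) * momI h z (μ s)) := fun s => by
      haveI := hprob s; exact qterm hK hz hg hh (μ s) L hgh
    have hr : ∀ s : ℝ, (∫ x, L (((x:ℂ) - z)⁻¹) ∂ μ s) = L (momR z (μ s)) := fun s => by
      haveI := hprob s; exact rterm hz (μ s) L
    simp only [hb', hq', hr] at hthis
    rw [hthis]
    have hsum : ∀ s : ℝ, L (G s) = L (-(momB b z (μ s)))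
        + L (momI g z (μ s) * momII h z (μ s) + momII g z (μ s) * momI h z (μ s)) := fun s => by
      rw [hGdef, ← L.map_add]
    have hint1 : Continuous fun s : ℝ => L (-(momB b z (μ s))) :=
      L.continuous.comp hcB.neg
    have hint2 : Continuous fun s : ℝ =>
        L (momI g z (μ s) * momII h z (μ s) + momII g z (μ s) * momI h z (μ s)) :=
      L.continuous.comp ((hcIg.mul hcIIh).add (hcIIg.mul hcIh))
    rw [add_assoc]
    congr 1
    rw [← intervalIntegral.integral_add (hint1.intervalIntegrable 0 τ)
      (hint2.intervalIntegrable 0 τ)]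
    exact intervalIntegral.integral_congr fun s _ => (hsum s).symm
  -- differentiability for each linear functional
  have hDL : ∀ L : ℂ →L[ℝ] ℝ, (∀ w : ℂ, |L w| ≤ ‖w‖) →
      HasDerivAt (fun τ : ℝ => L (momR z (μ τ))) (L (G t)) t := by
    intro L hL
    have hu : Continuous fun s => L (G s) := L.continuous.comp hcG
    have hFTC : HasDerivAt (fun τ : ℝ => L (momR z (μ 0)) + ∫ s in (0:ℝ)..τ, L (G s))
        (L (G t)) t := ((hu.integral_hasStrictDerivAt 0 t).hasDerivAt).const_add _
    refine hFTC.congr_of_eventuallyEq ?_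
    filter_upwards [isOpen_Ioi.mem_nhds ht] with τ hτ using key L hL τ (le_of_lt hτ)
  have hre := hDL Complex.reCLM (fun w => by simpa using Complex.abs_re_le_norm w)
  have him := hDL Complex.imCLM (fun w => by simpa using Complex.abs_im_le_norm w)
  have h1 := (hre.ofReal_comp).add ((him.ofReal_comp).mul_const Complex.I)
  have hfun : (fun τ : ℝ => ((Complex.reCLM (momR z (μ τ)) : ℝ) : ℂ)
      + ((Complex.imCLM (momR z (μ τ)) : ℝ) : ℂ) * Complex.I) = fun τ => momR z (μ τ) := by
    funext τ
    simp [Complex.reCLM_apply, Complex.imCLM_apply, Complex.re_add_im]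
  rw [show ((fun τ : ℝ => ((Complex.reCLM (momR z (μ τ)) : ℝ) : ℂ)) + fun τ => ((Complex.imCLM (momR z (μ τ)) : ℝ) : ℂ) * Complex.I) = fun τ => momR z (μ τ) from hfun] at h1
  have hval : ((Complex.reCLM (G t) : ℝ) : ℂ) + ((Complex.imCLM (G t) : ℝ) : ℂ) * Complex.I
      = G t := by
    simp [Complex.reCLM_apply, Complex.imCLM_apply, Complex.re_add_im]
  rw [hval] at h1
  show HasDerivAt (fun τ : ℝ => momR z (μ τ))
    (-(momB b z (μ t)) + momI g z (μ t) * momII h z (μ t)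
      + momII g z (μ t) * momI h z (μ t)) t
  have : G t = -(momB b z (μ t)) + momI g z (μ t) * momII h z (μ t)
      + momII g z (μ t) * momI h z (μ t) := by
    rw [hGdef]; ring
  rwa [this] at h1
end

section
/- Let α ∈ [0,1) and set λ = (1+α)/2 and λ* = (1−α)/2. Let (ν_t)_{t≥0} be Borel probability measures on ℝ with ν_0 = δ_0 and ν_t((0,∞)) = 1 for all t > 0, with finite first moments locally bounded in t, satisfying for every f ∈ C_b²(ℝ) the equation ⟨ν_t,f⟩ = f(0) + ∫_0^t ∫_ℝ f'(x) ν_s(dx) ds + (1/2) ∫_0^t ∬_{ℝ²} Δf(x,y)·(x+y) ν_s(dx)ν_s(dy) ds. Let ν̄_t denote the reflection of ν_t, i.e. ν̄_t(A) := ν_t(−A) for Borel sets A, and define μ_t := λ·ν_{λt} + λ*·ν̄_{λ*t}. Then (μ_t)_{t≥0} is a family of probability measures with μ_0 = δ_0 that satisfies, for every f ∈ C_b²(ℝ) and t ≥ 0, ⟨μ_t,f⟩ = f(0) + α ∫_0^t ∫_ℝ f'(x) μ_s(dx) ds + (1/2) ∫_0^t ∬_{ℝ²} Δf(x,y)·(|x|+|y|)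 μ_s(dx)μ_s(dy) ds, and μ_t((−∞,0)) = λ* > 0 for every t > 0. -/
open MeasureTheory Filter Set

lemma measurable_primitive (g : ℝ → ℝ) :
    Measurable (fun t : ℝ => ∫ s in Set.Ioc (0:ℝ) t, g s) := by
  classical
  set F : ℝ → ℝ := fun t => ∫ s in Set.Ioc (0:ℝ) t, g s with hF
  set S : Set ℝ := {t | IntegrableOn g (Set.Ioc 0 t) volume} with hS
  have hzero : ∀ t : ℝ, t ≤ 0 → F t = 0 := by
    intro t ht
    simp only [hF]
    rw [Set.Ioc_eq_empty (by linarith : ¬ (0:ℝ) < t)]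
    simp
  have hjunk : ∀ t : ℝ, t ∉ S → F t = 0 := fun t ht => integral_undef ht
  have hmono : ∀ {t t' : ℝ}, t' ≤ t → t ∈ S → t' ∈ S := by
    intro t t' h ht
    exact ht.mono_set (Set.Ioc_subset_Ioc_right h)
  have h0S : (0:ℝ) ∈ S := by
    simp only [hS, Set.mem_setOf_eq, Set.Ioc_self]
    exact integrableOn_empty
  have key : ∀ b : ℝ, 0 ≤ b → b ∈ S → Measurable (Set.indicator (Set.Iic b) F) := by
    intro b hb hint
    have hicc : IntegrableOn g (Set.Icc 0 b) volume := by
      rwa [integrableOn_Icc_iff_integrableOn_Ioc]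
    have hcont : ContinuousOn F (Set.Icc 0 b) := intervalIntegral.continuousOn_primitive hicc
    have hclamp : Continuous (fun t : ℝ => min (max t 0) b) := by fun_prop
    have hmem : ∀ t : ℝ, min (max t 0) b ∈ Set.Icc 0 b := fun t =>
      ⟨le_min (le_max_right _ _) hb, min_le_right _ _⟩
    have hFc : Continuous (fun t => F (min (max t 0) b)) :=
      hcont.comp_continuous hclamp hmem
    have heq : Set.indicator (Set.Iic b) F
        = Set.indicator (Set.Iic b) (fun t => F (min (max t 0) b)) := by
      funext t
      by_cases ht : t ∈ Set.Iic b
      · simp only [Set.indicator_of_mem ht]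
        rcases le_or_gt t 0 with h0 | h0
        · rw [hzero t h0, show min (max t 0) b = 0 by
            rw [max_eq_right h0, min_eq_left hb], hzero 0 le_rfl]
        · rw [max_eq_left h0.le, min_eq_left ht]
      · simp [Set.indicator_of_notMem ht]
    rw [heq]
    exact hFc.measurable.indicator measurableSet_Iic
  have main : ∀ b : ℕ → ℝ, (∀ n, 0 ≤ b n) → (∀ n, b n ∈ S) →
      (∀ t, t ∈ S → ∀ᶠ n in atTop, t ≤ b n) → Measurable F := by
    intro b hb0 hbS hcov
    apply measurable_of_tendsto_metrizable
      (fun n => key (b n) (hb0 n) (hbS n))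
    rw [tendsto_pi_nhds]
    intro t
    by_cases ht : t ∈ S
    · apply Tendsto.congr' _ (tendsto_const_nhds (x := F t))
      filter_upwards [hcov t ht] with n hn
      simp [Set.indicator_of_mem (Set.mem_Iic.mpr hn)]
    · have hFt : F t = 0 := hjunk t ht
      have : ∀ n, Set.indicator (Set.Iic (b n)) F t = 0 := by
        intro n
        by_cases h : t ∈ Set.Iic (b n)
        · simp [Set.indicator_of_mem h, hFt]
        · simp [Set.indicator_of_notMem h]
      simp only [this, hFt]
      exact tendsto_const_nhds
  by_cases hA : ∀ n : ℕ, (n : ℝ) ∈ S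
  · exact main (fun n => (n : ℝ)) (fun n => Nat.cast_nonneg n) hA
      (fun t _ => eventually_atTop.mpr ⟨⌈t⌉₊, fun n hn => le_trans (Nat.le_ceil t) (by exact_mod_cast hn : (⌈t⌉₊:ℝ) ≤ n)⟩)
  · push_neg at hA
    obtain ⟨n₀, hn₀⟩ := hA
    have hbdd : BddAbove S := by
      refine ⟨n₀, fun t ht => ?_⟩
      by_contra h
      exact hn₀ (hmono (le_of_not_ge h) ht)
    have hne : S.Nonempty := ⟨0, h0S⟩
    set u := sSup S with hu
    have hu0 : 0 ≤ u := le_csSup hbdd h0S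
    by_cases huS : u ∈ S
    · have hFeq : F = Set.indicator (Set.Iic u) F := by
        funext t
        by_cases ht : t ∈ Set.Iic u
        · simp [Set.indicator_of_mem ht]
        · rw [Set.indicator_of_notMem ht]
          refine hjunk t (fun hts => ht ?_)
          exact Set.mem_Iic.mpr (le_csSup hbdd hts)
      rw [hFeq]
      exact key u hu0 huS
    · obtain ⟨a, hamono, hatend, haS⟩ := exists_seq_tendsto_sSup hne hbdd
      refine main (fun n => max (a n) 0) (fun n => le_max_right _ _)
        (fun n => ?_) (fun t ht => ?_)
      · show max (a n) 0 ∈ S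
        rcases le_total (a n) 0 with h | h
        · rw [max_eq_right h]; exact h0S
        · rw [max_eq_left h]; exact haS n
      · have htu : t < u := by
          rcases lt_or_eq_of_le (le_csSup hbdd ht) with h | h
          · exact h
          · rw [hu, ← h]; exact absurd ht (h ▸ huS)
        have : ∀ᶠ n in atTop, t < a n := hatend.eventually (eventually_gt_nhds htu)
        filter_upwards [this] with n hn
        exact le_trans hn.le (le_max_left _ _)
open Real Topology

noncomputable def sig (c a x : ℝ) : ℝ := 1/2 + Real.arctan (c * (a - x)) / Real.pi

lemma hasDerivAt_u (c a x : ℝ) : HasDerivAt (fun x => c * (a - x)) (-c) x := by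
  simpa using ((hasDerivAt_id x).const_sub a).const_mul c

lemma abs_arctan_le (x : ℝ) : |Real.arctan x| ≤ Real.pi / 2 :=
  le_of_lt (abs_lt.mpr ⟨Real.neg_pi_div_two_lt_arctan x, Real.arctan_lt_pi_div_two x⟩)

lemma deriv_sig (c a : ℝ) :
    deriv (sig c a) = fun x => -c / (1 + (c * (a - x)) ^ 2) / Real.pi := by
  funext x
  have h : HasDerivAt (fun x => 1/2 + Real.arctan (c * (a - x)) / Real.pi)
      (-c / (1 + (c * (a - x)) ^ 2) / Real.pi) x := by
    have h1 := (hasDerivAt_u c a x).arctan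
    have h2 := (h1.div_const Real.pi).const_add (1/2 : ℝ)
    refine h2.congr_deriv ?_
    ring
  exact h.deriv

lemma deriv2_sig (c a : ℝ) :
    deriv (deriv (sig c a)) = fun x =>
      -(2 * c ^ 2 * (c * (a - x))) / ((1 + (c * (a - x)) ^ 2) ^ 2) / Real.pi := by
  rw [deriv_sig]
  funext x
  have hne : (1 + (c * (a - x)) ^ 2) ≠ 0 := by positivity
  have hg : HasDerivAt (fun x => 1 + (c * (a - x)) ^ 2)
      (2 * (c * (a - x)) * (-c)) x := by
    simpa using (((hasDerivAt_u c a x).pow 2).const_add 1)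
  have hinv : HasDerivAt (fun x => (1 + (c * (a - x)) ^ 2)⁻¹)
      (-(2 * (c * (a - x)) * (-c)) / (1 + (c * (a - x)) ^ 2) ^ 2) x := hg.inv hne
  have h : HasDerivAt (fun x => -c / (1 + (c * (a - x)) ^ 2) / Real.pi)
      (-(2 * c ^ 2 * (c * (a - x))) / ((1 + (c * (a - x)) ^ 2) ^ 2) / Real.pi) x := by
    have h3 := (hinv.const_mul (-c)).div_const Real.pi
    have he : (fun x => -c * (1 + (c * (a - x)) ^ 2)⁻¹ / Real.pi)
        = (fun x => -c / (1 + (c * (a - x)) ^ 2) / Real.pi) := by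
      funext y; ring
    rw [he] at h3
    refine h3.congr_deriv ?_
    field_simp
  exact h.deriv

lemma cbTwo_sig (c a : ℝ) : CbTwo (sig c a) := by
  have hpi : (1:ℝ) ≤ Real.pi := by linarith [Real.pi_gt_three]
  have hpi0 : (0:ℝ) < Real.pi := by linarith
  constructor
  · exact contDiff_const.add (ContDiff.div_const
      (Real.contDiff_arctan.comp (contDiff_const.mul (contDiff_const.sub contDiff_id))) _)
  · refine ⟨1 + |c| + c ^ 2, fun x => ⟨?_, ?_, ?_⟩⟩
    · have h1 : |Real.arctan (c * (a - x))| ≤ Real.pi / 2 := abs_arctan_le _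
      have h2 : |sig c a x| ≤ 1/2 + (Real.pi/2)/Real.pi := by
        rw [sig]
        refine (abs_add_le _ _).trans ?_
        rw [abs_of_pos (by norm_num : (0:ℝ) < 1/2), abs_div, abs_of_pos hpi0]
        gcongr
      have h3 : (Real.pi/2)/Real.pi = 1/2 := by field_simp
      rw [h3] at h2
      have : (0:ℝ) ≤ |c| + c ^ 2 := by positivity
      linarith
    · rw [deriv_sig]
      have hden : (1:ℝ) ≤ 1 + (c * (a - x)) ^ 2 := by nlinarith [sq_nonneg (c * (a-x))]
      have h1 : |-c / (1 + (c * (a - x)) ^ 2) / Real.pi|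
          = |c| / (1 + (c * (a - x)) ^ 2) / Real.pi := by
        rw [abs_div, abs_div, abs_neg, abs_of_pos hpi0,
          abs_of_pos (by linarith : (0:ℝ) < 1 + (c * (a - x)) ^ 2)]
      have a1 : |c| / (1 + (c * (a - x)) ^ 2) ≤ |c| := div_le_self (abs_nonneg c) hden
      have a2 : |c| / (1 + (c * (a - x)) ^ 2) / Real.pi ≤ |c| / (1 + (c * (a - x)) ^ 2) :=
        div_le_self (by positivity) hpi
      have : (0:ℝ) ≤ 1 + c^2 := by positivity
      rw [h1]
      linarith
    · rw [deriv2_sig]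
      set u := c * (a - x) with hu
      have hden : (0:ℝ) < 1 + u ^ 2 := by positivity
      have habs : |(-(2 * c ^ 2 * u)) / ((1 + u ^ 2) ^ 2) / Real.pi|
          = 2 * c ^ 2 * |u| / ((1 + u ^ 2) ^ 2) / Real.pi := by
        rw [abs_div, abs_div, abs_neg, abs_of_pos hpi0,
          abs_of_pos (by positivity : (0:ℝ) < (1 + u ^ 2) ^ 2), abs_mul,
          abs_of_nonneg (by positivity : (0:ℝ) ≤ 2 * c ^ 2)]
      have key : 2 * c ^ 2 * |u| / ((1 + u ^ 2) ^ 2) / Real.pi ≤ c ^ 2 := by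
        have h3 : 2 * |u| ≤ (1 + u ^ 2) ^ 2 := by
          nlinarith [sq_nonneg (|u| - 1), sq_abs u, sq_nonneg u, sq_nonneg (u^2)]
        have b1 : 2 * c ^ 2 * |u| / ((1 + u ^ 2) ^ 2) ≤ c ^ 2 := by
          rw [div_le_iff₀ (by positivity : (0:ℝ) < (1 + u ^ 2) ^ 2)]
          nlinarith [sq_nonneg c, abs_nonneg u]
        have b2 : 2 * c ^ 2 * |u| / ((1 + u ^ 2) ^ 2) / Real.pi
            ≤ 2 * c ^ 2 * |u| / ((1 + u ^ 2) ^ 2) := div_le_self (by positivity) hpi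
        linarith
      rw [habs]
      have : (0:ℝ) ≤ 1 + |c| := by positivity
      linarith

lemma sig_limit (c a x : ℝ) :
    Tendsto (fun n : ℕ => sig ((n:ℝ)+1) a x) atTop
      (𝓝 (if x < a then (1:ℝ) else if x = a then 1/2 else 0)) := by
  have hpi0 : (0:ℝ) < Real.pi := Real.pi_pos
  rcases lt_trichotomy x a with h | h | h
  · rw [if_pos h]
    have harg : Tendsto (fun n : ℕ => ((n:ℝ)+1) * (a - x)) atTop atTop := by
      apply Tendsto.atTop_mul_const (by linarith : 0 < a - x)
      exact tendsto_atTop_add_const_right atTop 1 tendsto_natCast_atTop_atTop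
    have harct : Tendsto (fun n : ℕ => Real.arctan (((n:ℝ)+1) * (a - x))) atTop
        (𝓝 (Real.pi/2)) :=
      (Real.tendsto_arctan_atTop.mono_right nhdsWithin_le_nhds).comp harg
    have := (harct.div_const Real.pi).const_add (1/2 : ℝ)
    have hval : 1/2 + (Real.pi/2)/Real.pi = 1 := by field_simp; ring
    rw [hval] at this
    exact this
  · subst h
    rw [if_neg (lt_irrefl x), if_pos rfl]
    have hconst : ∀ n : ℕ, sig ((n:ℝ)+1) x x = 1/2 := by
      intro n
      rw [sig]
      simp
    simp only [hconst]
    exact tendsto_const_nhds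
  · rw [if_neg (by linarith), if_neg (by intro he; rw [he] at h; exact lt_irrefl a h : ¬ x = a)]
    have harg : Tendsto (fun n : ℕ => ((n:ℝ)+1) * (a - x)) atTop atBot := by
      apply Tendsto.atTop_mul_const_of_neg (by linarith : a - x < 0)
      exact tendsto_atTop_add_const_right atTop 1 tendsto_natCast_atTop_atTop
    have harct : Tendsto (fun n : ℕ => Real.arctan (((n:ℝ)+1) * (a - x))) atTop
        (𝓝 (-(Real.pi/2))) :=
      (Real.tendsto_arctan_atBot.mono_right nhdsWithin_le_nhds).comp harg
    have := (harct.div_const Real.pi).const_add (1/2 : ℝ)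
    have hval : 1/2 + (-(Real.pi/2))/Real.pi = 0 := by
      field_simp
      ring
    rw [hval] at this
    exact this

open Topology

section Nu

variable {ν : ℝ → Measure ℝ}

lemma measurable_G
    (hνeq : ∀ f : ℝ → ℝ, CbTwo f → ∀ t : ℝ, 0 ≤ t →
      ∫ x, f x ∂(ν t) = f 0
        + (∫ s in (0:ℝ)..t, ∫ x, deriv f x ∂(ν s))
        + (1 / 2) * ∫ s in (0:ℝ)..t, ∫ x, ∫ y, deltaF f x y * (x + y) ∂(ν s) ∂(ν s))
    (φ : ℝ → ℝ) (hφ : CbTwo φ) :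
    Measurable (fun s : ℝ => ∫ x, φ x ∂(ν (max s 0))) := by
  have heq : (fun s : ℝ => ∫ x, φ x ∂(ν (max s 0)))
      = fun s => φ 0 + (∫ v in Set.Ioc (0:ℝ) (max s 0), ∫ x, deriv φ x ∂(ν v))
        + (1/2) * (∫ v in Set.Ioc (0:ℝ) (max s 0),
            ∫ x, ∫ y, deltaF φ x y * (x + y) ∂(ν v) ∂(ν v)) := by
    funext s
    have h0 : (0:ℝ) ≤ max s 0 := le_max_right s 0
    rw [hνeq φ hφ (max s 0) h0,
      intervalIntegral.integral_of_le h0, intervalIntegral.integral_of_le h0]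
  rw [heq]
  have hmax : Measurable (fun s : ℝ => max s 0) := measurable_id.max measurable_const
  have m1 : Measurable (fun s : ℝ => ∫ v in Set.Ioc (0:ℝ) (max s 0),
      ∫ x, deriv φ x ∂(ν v)) :=
    (measurable_primitive (fun v => ∫ x, deriv φ x ∂(ν v))).comp hmax
  have m2 : Measurable (fun s : ℝ => ∫ v in Set.Ioc (0:ℝ) (max s 0),
      ∫ x, ∫ y, deltaF φ x y * (x + y) ∂(ν v) ∂(ν v)) :=
    (measurable_primitive
      (fun v => ∫ x, ∫ y, deltaF φ x y * (x + y) ∂(ν v) ∂(ν v))).comp hmax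
  exact (measurable_const.add m1).add (measurable_const.mul m2)

lemma measurable_nu_hat (hνprob : ∀ t, IsProbabilityMeasure (ν t))
    (hνeq : ∀ f : ℝ → ℝ, CbTwo f → ∀ t : ℝ, 0 ≤ t →
      ∫ x, f x ∂(ν t) = f 0
        + (∫ s in (0:ℝ)..t, ∫ x, deriv f x ∂(ν s))
        + (1 / 2) * ∫ s in (0:ℝ)..t, ∫ x, ∫ y, deltaF f x y * (x + y) ∂(ν s) ∂(ν s)) :
    Measurable (fun s : ℝ => ν (max s 0)) := by
  -- auxiliary: measurability of s ↦ ν̂ s (Iio b) + ½ ν̂ s {b}, for each b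
  have hρ : ∀ b : ℝ, Measurable (fun s : ℝ =>
      (ν (max s 0) (Set.Iio b)).toReal + (1/2) * (ν (max s 0) {b}).toReal) := by
    intro b
    have hlim : ∀ s : ℝ, Tendsto (fun n : ℕ => ∫ x, sig ((n:ℝ)+1) b x ∂(ν (max s 0)))
        atTop (𝓝 ((ν (max s 0) (Set.Iio b)).toReal + (1/2) * (ν (max s 0) {b}).toReal)) := by
      intro s
      haveI := hνprob (max s 0)
      set l : ℝ → ℝ := fun x => if x < b then (1:ℝ) else if x = b then 1/2 else 0 with hl
      have hlint : ∫ x, l x ∂(ν (max s 0))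
          = (ν (max s 0) (Set.Iio b)).toReal + (1/2) * (ν (max s 0) {b}).toReal := by
        have hld : ∀ x, l x = (Set.indicator (Set.Iio b) (fun _ => (1:ℝ))) x
            + (Set.indicator {b} (fun _ => (1/2 : ℝ))) x := by
          intro x
          simp only [hl, Set.indicator_apply, Set.mem_Iio, Set.mem_singleton_iff]
          split_ifs with h1 h2
          · rw [h2] at h1; exact absurd h1 (lt_irrefl b)
          · norm_num
          · norm_num
          · norm_num
        rw [show (fun x => l x) = fun x => (Set.indicator (Set.Iio b) (fun _ => (1:ℝ))) x
            + (Set.indicator {b} (fun _ => (1/2 : ℝ))) x from funext hld]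
        rw [integral_add ((integrable_const (1:ℝ)).indicator measurableSet_Iio)
          ((integrable_const ((1:ℝ)/2)).indicator (measurableSet_singleton b))]
        rw [integral_indicator_const _ measurableSet_Iio,
          integral_indicator_const _ (measurableSet_singleton b)]
        simp [mul_comm]
        rfl
      rw [← hlint]
      apply tendsto_integral_of_dominated_convergence (fun _ => (1:ℝ))
      · intro n
        exact ((cbTwo_sig ((n:ℝ)+1) b).1.continuous).aestronglyMeasurable
      · exact integrable_const 1
      · intro n
        apply Eventually.of_forall
        intro x
        have h1 : |Real.arctan (((n:ℝ)+1) * (b - x))| ≤ Real.pi / 2 := abs_arctan_le _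
        have hpi0 : (0:ℝ) < Real.pi := Real.pi_pos
        rw [Real.norm_eq_abs, sig]
        refine (abs_add_le _ _).trans ?_
        rw [abs_of_pos (by norm_num : (0:ℝ) < 1/2), abs_div, abs_of_pos hpi0]
        have : |Real.arctan (((n:ℝ)+1) * (b - x))| / Real.pi ≤ (Real.pi/2) / Real.pi := by
          gcongr
        have h3 : (Real.pi/2)/Real.pi = 1/2 := by field_simp
        rw [h3] at this
        linarith
      · refine Eventually.of_forall (fun x => ?_)
        simpa only [hl] using sig_limit 1 b x
    -- each approximant is measurable in s
    have happrox : ∀ n : ℕ, Measurable (fun s : ℝ => ∫ x, sig ((n:ℝ)+1) b x ∂(ν (max s 0))) :=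
      fun n => measurable_G hνeq _ (cbTwo_sig _ b)
    exact measurable_of_tendsto_metrizable happrox (tendsto_pi_nhds.mpr hlim)
  -- measurability of s ↦ ν̂ s (Iio a)
  have hIio : ∀ a : ℝ, Measurable (fun s : ℝ => ν (max s 0) (Set.Iio a)) := by
    intro a
    set ak : ℕ → ℝ := fun k => a - 1/((k:ℝ)+1) with hak
    have hmono : Monotone fun k => Set.Iio (ak k) := by
      intro i j hij
      apply Set.Iio_subset_Iio
      have : ((i:ℝ)+1) ≤ ((j:ℝ)+1) := by exact_mod_cast Nat.succ_le_succ hij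
      have hi : (0:ℝ) < (i:ℝ)+1 := by positivity
      have := one_div_le_one_div_of_le hi this
      simp only [hak]
      linarith
    have hunion : (⋃ k, Set.Iio (ak k)) = Set.Iio a := by
      ext x
      simp only [Set.mem_iUnion, Set.mem_Iio]
      constructor
      · rintro ⟨k, hk⟩
        have : (0:ℝ) < 1/((k:ℝ)+1) := by positivity
        simp only [hak] at hk
        linarith
      · intro hx
        obtain ⟨n, hn⟩ := exists_nat_one_div_lt (by linarith : (0:ℝ) < a - x)
        exact ⟨n, by simp only [hak]; linarith⟩
    have htendsto : ∀ s : ℝ, Tendsto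
        (fun k : ℕ => (ν (max s 0) (Set.Iio (ak k))).toReal
          + (1/2) * (ν (max s 0) {ak k}).toReal)
        atTop (𝓝 ((ν (max s 0) (Set.Iio a)).toReal)) := by
      intro s
      haveI := hνprob (max s 0)
      have h1 : Tendsto (fun k : ℕ => ν (max s 0) (Set.Iio (ak k))) atTop
          (𝓝 (ν (max s 0) (Set.Iio a))) := by
        rw [← hunion]
        exact tendsto_measure_iUnion_atTop hmono
      have h1' := (ENNReal.tendsto_toReal (measure_ne_top _ _)).comp h1
      have hinj : Function.Injective ak := by
        intro i j hij
        simp only [hak] at hij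
        have : 1/((i:ℝ)+1) = 1/((j:ℝ)+1) := by linarith
        have hi : (0:ℝ) < (i:ℝ)+1 := by positivity
        have hj : (0:ℝ) < (j:ℝ)+1 := by positivity
        field_simp at this
        exact_mod_cast (by linarith : (i:ℝ) = j)
      have h2 : Tendsto (fun k : ℕ => ν (max s 0) {ak k}) atTop (𝓝 0) := by
        apply ENNReal.tendsto_atTop_zero_of_tsum_ne_top
        have hd : Pairwise (Function.onFun Disjoint fun k => ({ak k} : Set ℝ)) := by
          intro i j hij
          simp only [Function.onFun, Set.disjoint_singleton]
          exact fun h => hij (hinj h)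
        rw [← measure_iUnion hd (fun k => measurableSet_singleton _)]
        exact measure_ne_top _ _
      have h2' := (ENNReal.tendsto_toReal (by simp : (0:ENNReal) ≠ ⊤)).comp h2
      simp only [ENNReal.toReal_zero] at h2'
      have h2'' : Tendsto (fun k : ℕ => (1/2 : ℝ) * (ν (max s 0) {ak k}).toReal)
          atTop (𝓝 0) := by
        have := h2'.const_mul ((1:ℝ)/2)
        simpa using this
      have := h1'.add h2''
      simpa using this
    have : Measurable (fun s : ℝ => (ν (max s 0) (Set.Iio a)).toReal) :=
      measurable_of_tendsto_metrizable (fun k => hρ (ak k)) (tendsto_pi_nhds.mpr htendsto)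
    have heq : (fun s : ℝ => ν (max s 0) (Set.Iio a))
        = fun s => ENNReal.ofReal ((ν (max s 0) (Set.Iio a)).toReal) := by
      funext s
      haveI := hνprob (max s 0)
      rw [ENNReal.ofReal_toReal (measure_ne_top _ _)]
    rw [heq]
    exact ENNReal.measurable_ofReal.comp this
  -- Dynkin argument
  apply Measure.measurable_of_measurable_coe
  intro A hA
  apply MeasurableSpace.induction_on_inter (C := fun A _ => Measurable (fun s : ℝ => ν (max s 0) A))
    (borel_eq_generateFrom_Iio ℝ) isPiSystem_Iio ?_ ?_ ?_ ?_ A hA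
  · simp only [measure_empty]; exact measurable_const
  · rintro A ⟨a, rfl⟩
    exact hIio a
  · intro A hAm hA'
    have : (fun s : ℝ => ν (max s 0) Aᶜ) = fun s => 1 - ν (max s 0) A := by
      funext s
      haveI := hνprob (max s 0)
      rw [measure_compl hAm (measure_ne_top _ _), measure_univ]
    rw [this]
    exact measurable_const.sub hA'
  · intro g hdisj hgm hgmeas
    have : (fun s : ℝ => ν (max s 0) (⋃ i, g i)) = fun s => ∑' i, ν (max s 0) (g i) := by
      funext s
      exact measure_iUnion hdisj hgm
    rw [this]
    exact Measurable.ennreal_tsum hgmeas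

end Nu

lemma contDiff_deriv_of_two {f : ℝ → ℝ} (hf : ContDiff ℝ 2 f) : ContDiff ℝ 1 (deriv f) := by
  have h : ContDiff ℝ (1 + 1 : ℕ) f := by exact_mod_cast hf
  exact (contDiff_succ_iff_deriv.mp h).2.2

lemma continuous_deriv2 {f : ℝ → ℝ} (hf : ContDiff ℝ 2 f) :
    Continuous (deriv (deriv f)) :=
  (contDiff_one_iff_deriv.mp (contDiff_deriv_of_two hf)).2

lemma lip_deriv {f : ℝ → ℝ} {C : ℝ} (hf : ContDiff ℝ 2 f)
    (hC : ∀ x, |deriv (deriv f) x| ≤ C) (x y : ℝ) :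
    |deriv f x - deriv f y| ≤ C * |x - y| := by
  have hC0 : 0 ≤ C := le_trans (abs_nonneg _) (hC 0)
  have hlip : LipschitzWith C.toNNReal (deriv f) := by
    apply lipschitzWith_of_nnnorm_deriv_le ((contDiff_deriv_of_two hf).differentiable one_ne_zero)
    intro x
    rw [← NNReal.coe_le_coe, coe_nnnorm, Real.coe_toNNReal _ hC0]
    exact hC x
  have := hlip.dist_le_mul x y
  rwa [Real.dist_eq, Real.dist_eq, Real.coe_toNNReal _ hC0] at this

lemma abs_deltaF_le {f : ℝ → ℝ} {C : ℝ} (hf : ContDiff ℝ 2 f)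
    (hC : ∀ x, |deriv (deriv f) x| ≤ C) (x y : ℝ) : |deltaF f x y| ≤ C := by
  rw [deltaF]
  split_ifs with h
  · exact hC x
  · have hxy : x - y ≠ 0 := sub_ne_zero.mpr h
    rw [abs_div, div_le_iff₀ (abs_pos.mpr hxy)]
    exact lip_deriv hf hC x y

lemma measurable_deltaF {f : ℝ → ℝ} (hf : ContDiff ℝ 2 f) :
    Measurable (fun p : ℝ × ℝ => deltaF f p.1 p.2) := by
  have h1 : Continuous (deriv f) := (contDiff_deriv_of_two hf).continuous
  refine Measurable.ite (isClosed_eq continuous_fst continuous_snd).measurableSet ?_ ?_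
  · exact ((continuous_deriv2 hf).comp continuous_fst).measurable
  · exact (((h1.measurable.comp measurable_fst).sub
      (h1.measurable.comp measurable_snd)).div (measurable_fst.sub measurable_snd))

lemma deltaF_mul_of_ne {f : ℝ → ℝ} {x y : ℝ} (h : x ≠ y) :
    deltaF f x y * (x - y) = deriv f x - deriv f y := by
  rw [deltaF, if_neg h, div_mul_cancel₀]
  exact sub_ne_zero.mpr h

lemma deriv_comp_neg' (f : ℝ → ℝ) :
    deriv (fun x => f (-x)) = fun x => -deriv f (-x) := by
  funext x; rw [deriv_comp_neg]

lemma contDiff_comp_neg {f : ℝ → ℝ} {n : ℕ} (hf : ContDiff ℝ n f) :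
    ContDiff ℝ n (fun x => f (-x)) :=
  hf.comp contDiff_neg

lemma deriv2_comp_neg {f : ℝ → ℝ} (hf : ContDiff ℝ 2 f) :
    deriv (deriv (fun x => f (-x))) = fun x => deriv (deriv f) (-x) := by
  have h2 : Differentiable ℝ (deriv f) := (contDiff_deriv_of_two hf).differentiable one_ne_zero
  rw [deriv_comp_neg' f]
  funext x
  have h : HasDerivAt (fun x : ℝ => -deriv f (-x)) (-(deriv (deriv f) (-x) * -1)) x :=
    (((h2 (-x)).hasDerivAt.comp x (hasDerivAt_neg x))).neg
  rw [h.deriv]; ring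

lemma cbTwo_comp_neg {f : ℝ → ℝ} (hf : CbTwo f) : CbTwo (fun x => f (-x)) := by
  obtain ⟨hf2, C, hC⟩ := hf
  refine ⟨hf2.comp contDiff_neg, C, fun x => ?_⟩
  rw [deriv2_comp_neg hf2, deriv_comp_neg' f]
  simp only [abs_neg]
  exact ⟨(hC (-x)).1, (hC (-x)).2.1, (hC (-x)).2.2⟩

lemma deltaF_comp_neg {f : ℝ → ℝ} (hf : ContDiff ℝ 2 f) (x y : ℝ) :
    deltaF (fun x => f (-x)) x y = deltaF f (-x) (-y) := by
  rw [deltaF, deltaF, deriv2_comp_neg hf, deriv_comp_neg' f]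
  by_cases h : x = y
  · rw [if_pos h, if_pos (by rw [h])]
  · rw [if_neg h, if_neg (fun hn => h (by linarith [neg_injective hn] : x = y))]
    have h2 : -x - -y = -(x - y) := by ring
    rw [h2, div_neg, ← neg_div]
    congr 1
    ring

lemma integrable_of_bounded {w : ℝ → ℝ} {C : ℝ} {m : Measure ℝ} [IsFiniteMeasure m]
    (hw : AEStronglyMeasurable w m) (hC : ∀ x, |w x| ≤ C) : Integrable w m := by
  refine Integrable.mono' (integrable_const C) hw ?_
  exact Eventually.of_forall (fun x => by rw [Real.norm_eq_abs]; exact hC x)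

set_option maxHeartbeats 1000000 in
theorem stmt6 (α : ℝ) (hα0 : 0 ≤ α) (hα1 : α < 1)
    (lam lamStar : ℝ) (hlam : lam = (1 + α) / 2) (hlamStar : lamStar = (1 - α) / 2)
    (ν : ℝ → Measure ℝ) (hνprob : ∀ t, IsProbabilityMeasure (ν t))
    (hν0 : ν 0 = Measure.dirac 0)
    (hνpos : ∀ t : ℝ, 0 < t → ν t (Ioi 0) = 1)
    -- finite first moments, locally bounded in time
    (hνint : ∀ t : ℝ, 0 ≤ t → Integrable (fun x => |x|) (ν t))
    (hνbd : ∀ T > (0:ℝ), ∃ M : ℝ, ∀ t ∈ Icc (0:ℝ) T, ∫ x, |x| ∂(ν t) ≤ M)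
    -- `ν` solves the equation with drift 1 and kernel x+y
    (hνeq : ∀ f : ℝ → ℝ, CbTwo f → ∀ t : ℝ, 0 ≤ t →
      ∫ x, f x ∂(ν t) = f 0
        + (∫ s in (0:ℝ)..t, ∫ x, deriv f x ∂(ν s))
        + (1 / 2) * ∫ s in (0:ℝ)..t, ∫ x, ∫ y, deltaF f x y * (x + y) ∂(ν s) ∂(ν s))
    -- the mixture of `ν` and its reflection
    (μ : ℝ → Measure ℝ)
    (hμ : ∀ t : ℝ, μ t = ENNReal.ofReal lam • ν (lam * t)
      + ENNReal.ofReal lamStar • Measure.map (fun x : ℝ => -x) (ν (lamStar * t))) :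
    (∀ t, IsProbabilityMeasure (μ t)) ∧
    μ 0 = Measure.dirac 0 ∧
    -- `μ` solves the equation with drift α and kernel |x|+|y|
    (∀ f : ℝ → ℝ, CbTwo f → ∀ t : ℝ, 0 ≤ t →
      ∫ x, f x ∂(μ t) = f 0
        + α * (∫ s in (0:ℝ)..t, ∫ x, deriv f x ∂(μ s))
        + (1 / 2) * ∫ s in (0:ℝ)..t, ∫ x, ∫ y,
            deltaF f x y * (|x| + |y|) ∂(μ s) ∂(μ s)) ∧
    (∀ t : ℝ, 0 < t → μ t (Iio 0) = ENNReal.ofReal lamStar ∧ 0 < μ t (Iio 0)) := by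
  have hlam0 : 0 < lam := by rw [hlam]; linarith
  have hlamStar0 : 0 < lamStar := by rw [hlamStar]; linarith
  have hlam1 : lam ≤ 1 := by rw [hlam]; linarith
  have hlamStar1 : lamStar ≤ 1 := by rw [hlamStar]; linarith
  have hsum : lam + lamStar = 1 := by rw [hlam, hlamStar]; ring
  have hmneg : Measurable (fun x : ℝ => -x) := measurable_neg
  -- a.e. positivity
  have haepos : ∀ s : ℝ, 0 < s → ∀ᵐ x ∂(ν s), 0 < x := by
    intro s hs
    haveI := hνprob s
    have hc : ν s ((Set.Ioi (0:ℝ))ᶜ) = 0 := by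
      rw [measure_compl measurableSet_Ioi (measure_ne_top _ _), measure_univ, hνpos s hs]
      simp
    have hset : {x : ℝ | ¬ 0 < x} = (Set.Ioi (0:ℝ))ᶜ := by ext x; simp
    rw [ae_iff, hset]
    exact hc
  have hprobμ : ∀ t, IsProbabilityMeasure (μ t) := by
    intro t
    haveI := hνprob (lam * t); haveI := hνprob (lamStar * t)
    haveI : IsProbabilityMeasure (Measure.map (fun x : ℝ => -x) (ν (lamStar * t))) :=
      Measure.isProbabilityMeasure_map hmneg.aemeasurable
    constructor
    rw [hμ t]
    simp only [Measure.add_apply, Measure.smul_apply, smul_eq_mul]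
    rw [measure_univ, measure_univ, mul_one, mul_one,
      ← ENNReal.ofReal_add hlam0.le hlamStar0.le, hsum]
    simp
  have hdirac : μ 0 = Measure.dirac 0 := by
    rw [hμ 0, mul_zero, mul_zero, hν0, Measure.map_dirac' hmneg, neg_zero,
      ← add_smul, ← ENNReal.ofReal_add hlam0.le hlamStar0.le, hsum]
    simp
  have hIioμ : ∀ t : ℝ, 0 < t → μ t (Iio 0) = ENNReal.ofReal lamStar ∧ 0 < μ t (Iio 0) := by
    intro t htpos
    haveI := hνprob (lam * t)
    have h1 : ν (lam * t) (Iio 0) = 0 := by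
      have h2 : ν (lam * t) ((Set.Ioi (0:ℝ))ᶜ) = 0 := by
        rw [measure_compl measurableSet_Ioi (measure_ne_top _ _), measure_univ,
          hνpos _ (by positivity)]
        simp
      refine measure_mono_null (fun x hx => ?_) h2
      simp only [Set.mem_compl_iff, Set.mem_Ioi, not_lt]
      exact le_of_lt hx
    have h3 : Measure.map (fun x : ℝ => -x) (ν (lamStar * t)) (Iio 0) = 1 := by
      rw [Measure.map_apply hmneg measurableSet_Iio]
      have hpre : (fun x : ℝ => -x) ⁻¹' (Iio 0) = Ioi 0 := by ext x; simp
      rw [hpre, hνpos _ (by positivity)]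
    have h4 : μ t (Iio 0) = ENNReal.ofReal lamStar := by
      rw [hμ t]
      simp only [Measure.add_apply, Measure.smul_apply, smul_eq_mul]
      rw [h1, h3, mul_zero, mul_one, zero_add]
    exact ⟨h4, h4 ▸ ENNReal.ofReal_pos.mpr hlamStar0⟩
  refine ⟨hprobμ, hdirac, ?_, hIioμ⟩
  intro f hf t ht
  have hf2 : ContDiff ℝ 2 f := hf.1
  obtain ⟨C, hC⟩ := hf.2
  have hC0 : 0 ≤ C := le_trans (abs_nonneg _) (hC 0).1
  have hCd2 : ∀ x, |deriv (deriv f) x| ≤ C := fun x => (hC x).2.2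
  have hg : CbTwo (fun x => f (-x)) := cbTwo_comp_neg hf
  have hderivfm : Measurable (deriv f) := (contDiff_deriv_of_two hf2).continuous.measurable
  have habsm : Measurable (fun x : ℝ => |x|) := continuous_abs.measurable
  -- moment bound
  obtain ⟨M, hM⟩ := hνbd (t + 1) (by linarith)
  have hM0 : (0:ℝ) ≤ M :=
    le_trans (integral_nonneg (fun x => abs_nonneg x)) (hM 0 ⟨le_rfl, by linarith⟩)
  have hmombd : ∀ c u : ℝ, 0 < c → c ≤ 1 → u ∈ Set.Ioc (0:ℝ) t →
      ∫ x, |x| ∂ν (c * u) ≤ M := by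
    intro c u hc hc1 hu
    apply hM
    constructor
    · exact mul_nonneg hc.le hu.1.le
    · nlinarith [hu.2, hu.1.le]
  -- linear growth integrability
  have lint : ∀ (w : ℝ → ℝ) (c0 c1 : ℝ) (s : ℝ), 0 ≤ s → Measurable w →
      (∀ x, |w x| ≤ c0 + c1 * |x|) → Integrable w (ν s) := by
    intro w c0 c1 s hs hw hbd
    haveI := hνprob s
    refine Integrable.mono' ((integrable_const c0).add ((hνint s hs).const_mul c1))
      hw.aestronglyMeasurable (Eventually.of_forall (fun x => ?_))
    rw [Real.norm_eq_abs]
    exact hbd x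
  -- inner bound helper
  have innerbd : ∀ (Θ : ℝ → ℝ) (s c0 : ℝ), 0 ≤ s → (∫ y, |y| ∂ν s ≤ M) →
      (∀ y, |Θ y| ≤ c0 + C * |y|) → |∫ y, Θ y ∂ν s| ≤ c0 + C * M := by
    intro Θ s c0 hs hm hbd
    haveI := hνprob s
    have h1 : |∫ y, Θ y ∂ν s| ≤ ∫ y, (c0 + C * |y|) ∂ν s := by
      rw [← Real.norm_eq_abs]
      exact norm_integral_le_of_norm_le ((integrable_const c0).add ((hνint s hs).const_mul C))
        (Eventually.of_forall (fun y => by rw [Real.norm_eq_abs]; exact hbd y))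
    have h2 : ∫ y, (c0 + C * |y|) ∂ν s = c0 + C * ∫ y, |y| ∂ν s := by
      rw [integral_add (integrable_const c0) ((hνint s hs).const_mul C), integral_const,
        probReal_univ, integral_const_mul]
      simp
    rw [h2] at h1
    nlinarith [mul_le_mul_of_nonneg_left hm hC0]
  -- generic product bound for the deltaF kernels
  have hbdgen : ∀ (d z w : ℝ), |d| ≤ C → |d * (|z| + |w|)| ≤ C * |z| + C * |w| := by
    intro d z w hd
    rw [abs_mul, abs_of_nonneg (by positivity : (0:ℝ) ≤ |z| + |w|)]
    nlinarith [mul_le_mul_of_nonneg_right hd (by positivity : (0:ℝ) ≤ |z| + |w|),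
      abs_nonneg z, abs_nonneg w]
  have hdf : ∀ x y : ℝ, |deltaF f x y| ≤ C := abs_deltaF_le hf2 hCd2
  -- outer (double-integral) bound
  have kbd : ∀ (Θ : ℝ → ℝ → ℝ) (s s' : ℝ), 0 ≤ s → 0 ≤ s' →
      (∫ y, |y| ∂ν s ≤ M) → (∫ y, |y| ∂ν s' ≤ M) →
      (∀ x y, |Θ x y| ≤ C * (|x| + |y|)) →
      |∫ x, ∫ y, Θ x y ∂ν s' ∂ν s| ≤ C * M + C * M := by
    intro Θ s s' hs hs' hm hm' hbd
    refine innerbd (fun x => ∫ y, Θ x y ∂ν s') s (C * M) hs hm (fun x => ?_)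
    have := innerbd (fun y => Θ x y) s' (C * |x|) hs' hm' (fun y => by
      have := hbd x y; nlinarith)
    linarith [this]
  -- kernel machinery
  have hκmeas : Measurable (fun s : ℝ => ν (max s 0)) := measurable_nu_hat hνprob hνeq
  let κ : ProbabilityTheory.Kernel ℝ ℝ := ⟨fun s => ν (max s 0), hκmeas⟩
  haveI : ProbabilityTheory.IsMarkovKernel κ := ⟨fun s => hνprob _⟩
  have msingle : ∀ w : ℝ → ℝ, Measurable w →
      Measurable (fun s : ℝ => ∫ x, w x ∂ν (max s 0)) := by
    intro w hw
    have hun : StronglyMeasurable (Function.uncurry (fun (_ : ℝ) (x : ℝ) => w x)) :=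
      (hw.comp measurable_snd).stronglyMeasurable
    exact (MeasureTheory.StronglyMeasurable.integral_kernel_prod_right (κ := κ) hun).measurable
  -- product integrability
  have pint : ∀ s₁ s₂ : ℝ, 0 ≤ s₁ → 0 ≤ s₂ →
      Integrable (fun p : ℝ × ℝ => |p.1| + |p.2|) ((ν s₁).prod (ν s₂)) := by
    intro s₁ s₂ h1 h2
    haveI := hνprob s₁; haveI := hνprob s₂
    have hmeas : AEStronglyMeasurable (fun p : ℝ × ℝ => |p.1| + |p.2|)
        ((ν s₁).prod (ν s₂)) :=
      (((habsm.comp measurable_fst).add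
        (habsm.comp measurable_snd)).stronglyMeasurable).aestronglyMeasurable
    rw [integrable_prod_iff hmeas]
    constructor
    · exact Eventually.of_forall (fun x => (integrable_const |x|).add (hνint s₂ h2))
    · refine (integrable_congr (Eventually.of_forall (fun x => ?_))).mpr
        ((hνint s₁ h1).add (integrable_const (∫ y, |y| ∂ν s₂)))
      have h4 : ∀ y : ℝ, ‖|x| + |y|‖ = |x| + |y| := fun y => by
        rw [Real.norm_eq_abs, abs_of_nonneg (by positivity)]
      simp_rw [h4]
      rw [integral_add (integrable_const _) (hνint s₂ h2), integral_const, probReal_univ]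
      simp
  have mdouble : ∀ Θ : ℝ × ℝ → ℝ, Measurable Θ → (∀ p, |Θ p| ≤ C * (|p.1| + |p.2|)) →
      Measurable (fun s : ℝ => ∫ x, ∫ y, Θ (x, y) ∂ν (max s 0) ∂ν (max s 0)) := by
    intro Θ hΘ hbd
    have hintp : ∀ s : ℝ, Integrable Θ ((ν (max s 0)).prod (ν (max s 0))) := by
      intro s
      refine Integrable.mono'
        ((pint _ _ (le_max_right s 0) (le_max_right s 0)).const_mul C)
        hΘ.aestronglyMeasurable (Eventually.of_forall (fun p => ?_))
      rw [Real.norm_eq_abs]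
      exact hbd p
    have hun : StronglyMeasurable (Function.uncurry (fun (_ : ℝ) (p : ℝ × ℝ) => Θ p)) :=
      (hΘ.comp measurable_snd).stronglyMeasurable
    have h1 : Measurable (fun s : ℝ => ∫ p, Θ p ∂((κ.prod κ) s)) :=
      (MeasureTheory.StronglyMeasurable.integral_kernel_prod_right
        (κ := κ.prod κ) hun).measurable
    have h2 : (fun s : ℝ => ∫ x, ∫ y, Θ (x, y) ∂ν (max s 0) ∂ν (max s 0))
        = fun s => ∫ p, Θ p ∂((κ.prod κ) s) := by
      funext s
      rw [ProbabilityTheory.Kernel.prod_apply]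
      exact (integral_prod Θ (hintp s)).symm
    rw [h2]
    exact h1
  -- expansion of μ-integrals
  have expand : ∀ (s : ℝ) (w : ℝ → ℝ), 0 ≤ s → Measurable w →
      (∃ c0 c1 : ℝ, ∀ x, |w x| ≤ c0 + c1 * |x|) →
      ∫ x, w x ∂(μ s) = lam * ∫ x, w x ∂ν (lam * s)
        + lamStar * ∫ x, w (-x) ∂ν (lamStar * s) := by
    intro s w hs hw hbd
    obtain ⟨c0, c1, hbd⟩ := hbd
    have hint1 : Integrable w (ν (lam * s)) := lint w c0 c1 _ (by positivity) hw hbd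
    have hwneg : ∀ x, |w (-x)| ≤ c0 + c1 * |x| := fun x => by
      have := hbd (-x); rwa [abs_neg] at this
    have hint2' : Integrable (fun x => w (-x)) (ν (lamStar * s)) :=
      lint _ c0 c1 _ (by positivity) (hw.comp hmneg) hwneg
    have hint2 : Integrable w (Measure.map (fun x : ℝ => -x) (ν (lamStar * s))) := by
      rw [integrable_map_measure hw.aestronglyMeasurable hmneg.aemeasurable]
      exact hint2'
    rw [hμ s, integral_add_measure (hint1.smul_measure ENNReal.ofReal_ne_top)
      (hint2.smul_measure ENNReal.ofReal_ne_top),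
      integral_smul_measure, integral_smul_measure,
      ENNReal.toReal_ofReal hlam0.le, ENNReal.toReal_ofReal hlamStar0.le,
      integral_map hmneg.aemeasurable hw.aestronglyMeasurable]
    simp [smul_eq_mul]
  -- interval integrability maker
  have makeII : ∀ (F F' : ℝ → ℝ) (K : ℝ), Measurable F' →
      (∀ u, u ∈ Set.Ioc (0:ℝ) t → F u = F' u) →
      (∀ u, u ∈ Set.Ioc (0:ℝ) t → |F u| ≤ K) →
      IntervalIntegrable F volume 0 t := by
    intro F F' K hF' hFF' hK
    rw [intervalIntegrable_iff_integrableOn_Ioc_of_le ht]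
    have hmeas : AEStronglyMeasurable F (volume.restrict (Set.Ioc 0 t)) := by
      refine (hF'.stronglyMeasurable.aestronglyMeasurable).congr ?_
      rw [Filter.EventuallyEq, ae_restrict_iff' measurableSet_Ioc]
      exact Eventually.of_forall (fun u hu => (hFF' u hu).symm)
    refine Integrable.mono' (integrable_const K) hmeas ?_
    rw [ae_restrict_iff' measurableSet_Ioc]
    exact Eventually.of_forall (fun u hu => by rw [Real.norm_eq_abs]; exact hK u hu)
  -- the four interval integrable integrands
  have hIIA : IntervalIntegrable (fun u => ∫ x, deriv f x ∂ν (lam * u)) volume 0 t := by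
    refine makeII _ (fun u => ∫ x, deriv f x ∂ν (max (lam * u) 0)) (C + C * M)
      ((msingle _ hderivfm).comp (measurable_const_mul lam)) (fun u hu => ?_) (fun u hu => ?_)
    · simp only [max_eq_left (mul_nonneg hlam0.le hu.1.le : (0:ℝ) ≤ lam * u)]
    · exact innerbd _ _ C (mul_nonneg hlam0.le hu.1.le) (hmombd lam u hlam0 hlam1 hu)
        (fun y => by have := (hC y).2.1; nlinarith [abs_nonneg y])
  have hIIB : IntervalIntegrable (fun u => ∫ x, deriv f (-x) ∂ν (lamStar * u)) volume 0 t := by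
    refine makeII _ (fun u => ∫ x, deriv f (-x) ∂ν (max (lamStar * u) 0)) (C + C * M)
      ((msingle _ (hderivfm.comp hmneg)).comp (measurable_const_mul lamStar))
      (fun u hu => ?_) (fun u hu => ?_)
    · simp only [max_eq_left (mul_nonneg hlamStar0.le hu.1.le : (0:ℝ) ≤ lamStar * u)]
    · exact innerbd _ _ C (mul_nonneg hlamStar0.le hu.1.le)
        (hmombd lamStar u hlamStar0 hlamStar1 hu)
        (fun y => by have := (hC (-y)).2.1; nlinarith [abs_nonneg y])
  have hθf : Measurable (fun p : ℝ × ℝ => deltaF f p.1 p.2 * (p.1 + p.2)) :=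
    (measurable_deltaF hf2).mul (measurable_fst.add measurable_snd)
  have hθg : Measurable (fun p : ℝ × ℝ => deltaF f (-p.1) (-p.2) * (p.1 + p.2)) :=
    ((measurable_deltaF hf2).comp (measurable_fst.neg.prodMk measurable_snd.neg)).mul
      (measurable_fst.add measurable_snd)
  have hbdθf : ∀ p : ℝ × ℝ, |deltaF f p.1 p.2 * (p.1 + p.2)| ≤ C * (|p.1| + |p.2|) := by
    intro p
    rw [abs_mul]
    have h1 : |p.1 + p.2| ≤ |p.1| + |p.2| := abs_add_le _ _
    nlinarith [hdf p.1 p.2, abs_nonneg (deltaF f p.1 p.2), abs_nonneg (p.1 + p.2),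
      abs_nonneg p.1, abs_nonneg p.2]
  have hbdθg : ∀ p : ℝ × ℝ, |deltaF f (-p.1) (-p.2) * (p.1 + p.2)| ≤ C * (|p.1| + |p.2|) := by
    intro p
    rw [abs_mul]
    have h1 : |p.1 + p.2| ≤ |p.1| + |p.2| := abs_add_le _ _
    nlinarith [hdf (-p.1) (-p.2), abs_nonneg (deltaF f (-p.1) (-p.2)), abs_nonneg (p.1 + p.2),
      abs_nonneg p.1, abs_nonneg p.2]
  have hIIKA : IntervalIntegrable
      (fun u => ∫ x, ∫ y, deltaF f x y * (x + y) ∂ν (lam * u) ∂ν (lam * u)) volume 0 t := by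
    refine makeII _
      (fun u => ∫ x, ∫ y, deltaF f x y * (x + y) ∂ν (max (lam * u) 0) ∂ν (max (lam * u) 0))
      (C * M + C * M)
      ((mdouble _ hθf hbdθf).comp (measurable_const_mul lam)) (fun u hu => ?_) (fun u hu => ?_)
    · simp only [max_eq_left (mul_nonneg hlam0.le hu.1.le : (0:ℝ) ≤ lam * u)]
    · refine kbd _ _ _ (mul_nonneg hlam0.le hu.1.le) (mul_nonneg hlam0.le hu.1.le)
        (hmombd lam u hlam0 hlam1 hu) (hmombd lam u hlam0 hlam1 hu) (fun x y => ?_)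
      simpa using hbdθf (x, y)
  have hIIKB : IntervalIntegrable
      (fun u => ∫ x, ∫ y, deltaF f (-x) (-y) * (x + y) ∂ν (lamStar * u) ∂ν (lamStar * u))
      volume 0 t := by
    refine makeII _
      (fun u => ∫ x, ∫ y, deltaF f (-x) (-y) * (x + y)
        ∂ν (max (lamStar * u) 0) ∂ν (max (lamStar * u) 0))
      (C * M + C * M)
      ((mdouble _ hθg hbdθg).comp (measurable_const_mul lamStar))
      (fun u hu => ?_) (fun u hu => ?_)
    · simp only [max_eq_left (mul_nonneg hlamStar0.le hu.1.le : (0:ℝ) ≤ lamStar * u)]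
    · refine kbd _ _ _ (mul_nonneg hlamStar0.le hu.1.le) (mul_nonneg hlamStar0.le hu.1.le)
        (hmombd lamStar u hlamStar0 hlamStar1 hu) (hmombd lamStar u hlamStar0 hlamStar1 hu)
        (fun x y => ?_)
      simpa using hbdθg (x, y)
  -- scaling helper
  have hscale : ∀ (c : ℝ), c ≠ 0 → ∀ F : ℝ → ℝ,
      (∫ s in (0:ℝ)..(c*t), F s) = c * ∫ u in (0:ℝ)..t, F (c*u) := by
    intro c hc F
    have h0 : (∫ u in (0:ℝ)..t, F (c*u)) = c⁻¹ • ∫ s in c*(0:ℝ)..c*t, F s :=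
      intervalIntegral.integral_comp_mul_left F hc
    rw [h0, mul_zero, smul_eq_mul, ← mul_assoc, mul_inv_cancel₀ hc, one_mul]
  have hsA : (∫ s in (0:ℝ)..(lam*t), ∫ x, deriv f x ∂ν s)
      = lam * ∫ u in (0:ℝ)..t, ∫ x, deriv f x ∂ν (lam * u) :=
    hscale lam (ne_of_gt hlam0) _
  have hsB : (∫ s in (0:ℝ)..(lamStar*t), ∫ x, deriv f (-x) ∂ν s)
      = lamStar * ∫ u in (0:ℝ)..t, ∫ x, deriv f (-x) ∂ν (lamStar * u) :=
    hscale lamStar (ne_of_gt hlamStar0) _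
  have hsKA : (∫ s in (0:ℝ)..(lam*t), ∫ x, ∫ y, deltaF f x y * (x + y) ∂ν s ∂ν s)
      = lam * ∫ u in (0:ℝ)..t, ∫ x, ∫ y, deltaF f x y * (x + y) ∂ν (lam*u) ∂ν (lam*u) :=
    hscale lam (ne_of_gt hlam0) _
  have hsKB : (∫ s in (0:ℝ)..(lamStar*t), ∫ x, ∫ y, deltaF f (-x) (-y) * (x + y) ∂ν s ∂ν s)
      = lamStar * ∫ u in (0:ℝ)..t,
          ∫ x, ∫ y, deltaF f (-x) (-y) * (x + y) ∂ν (lamStar*u) ∂ν (lamStar*u) :=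
    hscale lamStar (ne_of_gt hlamStar0) _
  -- the two rescaled equations
  have h1 := hνeq f hf (lam * t) (mul_nonneg hlam0.le ht)
  rw [hsA, hsKA] at h1
  have h2 := hνeq (fun x => f (-x)) hg (lamStar * t) (mul_nonneg hlamStar0.le ht)
  simp only [deriv_comp_neg' f, deltaF_comp_neg hf2, neg_zero] at h2
  simp only [integral_neg] at h2
  simp only [intervalIntegral.integral_neg] at h2
  rw [hsB, hsKB] at h2
  -- expansion of ∫ f dμ t
  have hexp := expand t f ht hf2.continuous.measurable
    ⟨C, 0, fun x => by rw [zero_mul, add_zero]; exact (hC x).1⟩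
  have E1 : ∫ x, f x ∂(μ t) = f 0
      + lam^2 * (∫ u in (0:ℝ)..t, ∫ x, deriv f x ∂ν (lam * u))
      - lamStar^2 * (∫ u in (0:ℝ)..t, ∫ x, deriv f (-x) ∂ν (lamStar * u))
      + (1/2) * (lam^2 * (∫ u in (0:ℝ)..t,
          ∫ x, ∫ y, deltaF f x y * (x+y) ∂ν (lam*u) ∂ν (lam*u)))
      + (1/2) * (lamStar^2 * (∫ u in (0:ℝ)..t,
          ∫ x, ∫ y, deltaF f (-x) (-y) * (x+y) ∂ν (lamStar*u) ∂ν (lamStar*u))) := by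
    rw [hexp, h1, h2]
    linear_combination (f 0) * hsum
  have E2 : (∫ s in (0:ℝ)..t, ∫ x, deriv f x ∂(μ s))
      = lam * (∫ u in (0:ℝ)..t, ∫ x, deriv f x ∂ν (lam * u))
        + lamStar * (∫ u in (0:ℝ)..t, ∫ x, deriv f (-x) ∂ν (lamStar * u)) := by
    have hcong : (∫ s in (0:ℝ)..t, ∫ x, deriv f x ∂(μ s))
        = ∫ u in (0:ℝ)..t, (lam * (∫ x, deriv f x ∂ν (lam * u))
            + lamStar * (∫ x, deriv f (-x) ∂ν (lamStar * u))) := by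
      apply intervalIntegral.integral_congr
      intro u hu
      rw [Set.uIcc_of_le ht] at hu
      exact expand u (deriv f) hu.1 hderivfm
        ⟨C, 0, fun x => by rw [zero_mul, add_zero]; exact (hC x).2.1⟩
    rw [hcong, intervalIntegral.integral_add (hIIA.const_mul lam) (hIIB.const_mul lamStar),
      intervalIntegral.integral_const_mul, intervalIntegral.integral_const_mul]
  -- pointwise identity for the kernel term
  have hptw : ∀ u, u ∈ Set.Ioc (0:ℝ) t →
      (∫ x, ∫ y, deltaF f x y * (|x| + |y|) ∂(μ u) ∂(μ u))
      = lam^2 * (∫ x, ∫ y, deltaF f x y * (x+y) ∂ν (lam*u) ∂ν (lam*u))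
        + (lamStar^2 * (∫ x, ∫ y, deltaF f (-x) (-y) * (x+y) ∂ν (lamStar*u) ∂ν (lamStar*u))
          + (2*lam*lamStar) * ((∫ x, deriv f x ∂ν (lam*u))
              - (∫ x, deriv f (-x) ∂ν (lamStar*u)))) := by
    intro u hu
    have hu0 : 0 < u := hu.1
    have hs1p : 0 < lam * u := by positivity
    have hs2p : 0 < lamStar * u := by positivity
    haveI := hνprob (lam * u); haveI := hνprob (lamStar * u)
    have ae1 := haepos _ hs1p
    have ae2 := haepos _ hs2p
    have hm1 := hmombd lam u hlam0 hlam1 hu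
    have hm2 := hmombd lamStar u hlamStar0 hlamStar1 hu
    have hbdh : ∀ x y : ℝ, |deltaF f x y * (|x| + |y|)| ≤ C * |x| + C * |y| := by
      intro x y
      have := hbdgen (deltaF f x y) x y (hdf x y)
      linarith
    have winner : ∀ x : ℝ, (∫ y, deltaF f x y * (|x| + |y|) ∂(μ u))
        = lam * (∫ y, deltaF f x y * (|x| + |y|) ∂ν (lam * u))
          + lamStar * (∫ y, deltaF f x (-y) * (|x| + |-y|) ∂ν (lamStar * u)) := by
      intro x
      exact expand u _ hu0.le
        (((measurable_deltaF hf2).comp measurable_prodMk_left).mul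
          (measurable_const.add habsm)) ⟨C * |x|, C, fun y => hbdh x y⟩
    have hPmeas : Measurable
        (fun x : ℝ => ∫ y, deltaF f x y * (|x| + |y|) ∂ν (lam * u)) := by
      have hsm : StronglyMeasurable
          (fun p : ℝ × ℝ => deltaF f p.1 p.2 * (|p.1| + |p.2|)) :=
        ((measurable_deltaF hf2).mul
          ((habsm.comp measurable_fst).add (habsm.comp measurable_snd))).stronglyMeasurable
      exact (hsm.integral_prod_right' (ν := ν (lam * u))).measurable
    have hQmeas : Measurable
        (fun x : ℝ => ∫ y, deltaF f x (-y) * (|x| + |-y|) ∂ν (lamStar * u)) := by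
      have hsm : StronglyMeasurable
          (fun p : ℝ × ℝ => deltaF f p.1 (-p.2) * (|p.1| + |-p.2|)) :=
        (((measurable_deltaF hf2).comp (measurable_fst.prodMk measurable_snd.neg)).mul
          ((habsm.comp measurable_fst).add
            (habsm.comp measurable_snd.neg))).stronglyMeasurable
      exact (hsm.integral_prod_right' (ν := ν (lamStar * u))).measurable
    have hPbd : ∀ x : ℝ, |∫ y, deltaF f x y * (|x| + |y|) ∂ν (lam * u)| ≤ C * |x| + C * M :=
      fun x => innerbd _ _ (C * |x|) hs1p.le hm1 (fun y => hbdh x y)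
    have hQbd : ∀ x : ℝ,
        |∫ y, deltaF f x (-y) * (|x| + |-y|) ∂ν (lamStar * u)| ≤ C * |x| + C * M := by
      intro x
      refine innerbd _ _ (C * |x|) hs2p.le hm2 (fun y => ?_)
      have h := hbdgen (deltaF f x (-y)) x (-y) (hdf x (-y))
      simp only [abs_neg] at h ⊢
      linarith
    have houter := expand u (fun x => ∫ y, deltaF f x y * (|x| + |y|) ∂(μ u)) hu0.le
      (by
        rw [show (fun x : ℝ => ∫ y, deltaF f x y * (|x| + |y|) ∂(μ u))
            = fun x => lam * (∫ y, deltaF f x y * (|x| + |y|) ∂ν (lam * u))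
              + lamStar * (∫ y, deltaF f x (-y) * (|x| + |-y|) ∂ν (lamStar * u))
          from funext winner]
        exact (hPmeas.const_mul lam).add (hQmeas.const_mul lamStar))
      ⟨C * M, C, by
        intro x
        simp only [winner]
        have hh1 := hPbd x
        have hh2 := hQbd x
        have hh3 := abs_add_le (lam * (∫ y, deltaF f x y * (|x| + |y|) ∂ν (lam * u)))
          (lamStar * (∫ y, deltaF f x (-y) * (|x| + |-y|) ∂ν (lamStar * u)))
        rw [abs_mul, abs_mul, abs_of_pos hlam0, abs_of_pos hlamStar0] at hh3
        nlinarith [abs_nonneg (∫ y, deltaF f x y * (|x| + |y|) ∂ν (lam * u)),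
          abs_nonneg (∫ y, deltaF f x (-y) * (|x| + |-y|) ∂ν (lamStar * u)),
          mul_le_mul_of_nonneg_left hh1 hlam0.le,
          mul_le_mul_of_nonneg_left hh2 hlamStar0.le]⟩
    rw [houter]
    simp only [winner]
    have hPint : Integrable
        (fun x : ℝ => ∫ y, deltaF f x y * (|x| + |y|) ∂ν (lam * u)) (ν (lam * u)) :=
      lint _ (C * M) C _ hs1p.le hPmeas (fun x => by have := hPbd x; linarith)
    have hQint : Integrable
        (fun x : ℝ => ∫ y, deltaF f x (-y) * (|x| + |-y|) ∂ν (lamStar * u)) (ν (lam * u)) :=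
      lint _ (C * M) C _ hs1p.le hQmeas (fun x => by have := hQbd x; linarith)
    have hPnegint : Integrable
        (fun x : ℝ => ∫ y, deltaF f (-x) y * (|-x| + |y|) ∂ν (lam * u)) (ν (lamStar * u)) :=
      lint _ (C * M) C _ hs2p.le (hPmeas.comp hmneg)
        (fun x => by have h := hPbd (-x); simp only [abs_neg] at h ⊢; linarith)
    have hQnegint : Integrable
        (fun x : ℝ => ∫ y, deltaF f (-x) (-y) * (|-x| + |-y|) ∂ν (lamStar * u))
        (ν (lamStar * u)) :=
      lint _ (C * M) C _ hs2p.le (hQmeas.comp hmneg)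
        (fun x => by have h := hQbd (-x); simp only [abs_neg] at h ⊢; linarith)
    rw [integral_add (hPint.const_mul lam) (hQint.const_mul lamStar),
      integral_add (hPnegint.const_mul lam) (hQnegint.const_mul lamStar),
      integral_const_mul, integral_const_mul, integral_const_mul, integral_const_mul]
    -- the four evaluations
    have hintfneg : Integrable (fun y : ℝ => deriv f (-y)) (ν (lamStar * u)) :=
      lint _ C 0 _ hs2p.le (hderivfm.comp hmneg)
        (fun y => by rw [zero_mul, add_zero]; exact (hC (-y)).2.1)
    have hintf1 : Integrable (deriv f) (ν (lam * u)) :=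
      lint _ C 0 _ hs1p.le hderivfm
        (fun y => by rw [zero_mul, add_zero]; exact (hC y).2.1)
    have ha : (∫ x, ∫ y, deltaF f x y * (|x| + |y|) ∂ν (lam*u) ∂ν (lam*u))
        = ∫ x, ∫ y, deltaF f x y * (x + y) ∂ν (lam*u) ∂ν (lam*u) := by
      apply integral_congr_ae
      filter_upwards [ae1] with x hx
      apply integral_congr_ae
      filter_upwards [ae1] with y hy
      rw [abs_of_pos hx, abs_of_pos hy]
    have hb : (∫ x, ∫ y, deltaF f x (-y) * (|x| + |-y|) ∂ν (lamStar*u) ∂ν (lam*u))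
        = (∫ x, deriv f x ∂ν (lam*u)) - (∫ x, deriv f (-x) ∂ν (lamStar*u)) := by
      have hbx : ∀ᵐ x ∂ν (lam*u), (∫ y, deltaF f x (-y) * (|x| + |-y|) ∂ν (lamStar*u))
          = deriv f x - ∫ y, deriv f (-y) ∂ν (lamStar*u) := by
        filter_upwards [ae1] with x hx
        have hceq : ∀ᵐ y ∂ν (lamStar*u),
            deltaF f x (-y) * (|x| + |-y|) = deriv f x - deriv f (-y) := by
          filter_upwards [ae2] with y hy
          rw [abs_of_pos hx, abs_neg, abs_of_pos hy]
          have hne : x ≠ -y := by intro h; rw [h] at hx; linarith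
          have h5 := deltaF_mul_of_ne (f := f) hne
          rw [sub_neg_eq_add] at h5
          exact h5
        rw [integral_congr_ae hceq,
          integral_sub (integrable_const _) hintfneg, integral_const, probReal_univ]
        simp
      rw [integral_congr_ae hbx, integral_sub hintf1 (integrable_const _), integral_const,
        probReal_univ]
      simp
    have hcc : (∫ x, ∫ y, deltaF f (-x) y * (|-x| + |y|) ∂ν (lam*u) ∂ν (lamStar*u))
        = (∫ x, deriv f x ∂ν (lam*u)) - (∫ x, deriv f (-x) ∂ν (lamStar*u)) := by
      have hcx : ∀ᵐ x ∂ν (lamStar*u), (∫ y, deltaF f (-x) y * (|-x| + |y|) ∂ν (lam*u))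
          = (∫ y, deriv f y ∂ν (lam*u)) - deriv f (-x) := by
        filter_upwards [ae2] with x hx
        have hceq : ∀ᵐ y ∂ν (lam*u),
            deltaF f (-x) y * (|-x| + |y|) = deriv f y - deriv f (-x) := by
          filter_upwards [ae1] with y hy
          rw [abs_neg, abs_of_pos hx, abs_of_pos hy]
          have hne : -x ≠ y := by intro h; rw [← h] at hy; linarith
          have h5 := deltaF_mul_of_ne (f := f) hne
          have h6 : deltaF f (-x) y * (x + y) = -(deltaF f (-x) y * (-x - y)) := by ring
          rw [h6, h5]
          ring
        rw [integral_congr_ae hceq, integral_sub hintf1 (integrable_const _), integral_const,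
          probReal_univ]
        simp
      rw [integral_congr_ae hcx, integral_sub (integrable_const _) hintfneg, integral_const,
        probReal_univ]
      simp
    have hd : (∫ x, ∫ y, deltaF f (-x) (-y) * (|-x| + |-y|) ∂ν (lamStar*u) ∂ν (lamStar*u))
        = ∫ x, ∫ y, deltaF f (-x) (-y) * (x + y) ∂ν (lamStar*u) ∂ν (lamStar*u) := by
      apply integral_congr_ae
      filter_upwards [ae2] with x hx
      apply integral_congr_ae
      filter_upwards [ae2] with y hy
      rw [abs_neg, abs_neg, abs_of_pos hx, abs_of_pos hy]
    rw [ha, hb, hcc, hd]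
    ring
  have E3 : (∫ s in (0:ℝ)..t, ∫ x, ∫ y, deltaF f x y * (|x| + |y|) ∂(μ s) ∂(μ s))
      = lam^2 * (∫ u in (0:ℝ)..t, ∫ x, ∫ y, deltaF f x y * (x+y) ∂ν (lam*u) ∂ν (lam*u))
        + (lamStar^2 * (∫ u in (0:ℝ)..t,
            ∫ x, ∫ y, deltaF f (-x) (-y) * (x+y) ∂ν (lamStar*u) ∂ν (lamStar*u))
          + (2*lam*lamStar) * ((∫ u in (0:ℝ)..t, ∫ x, deriv f x ∂ν (lam*u))
              - (∫ u in (0:ℝ)..t, ∫ x, deriv f (-x) ∂ν (lamStar*u)))) := by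
    have hcong : (∫ s in (0:ℝ)..t, ∫ x, ∫ y, deltaF f x y * (|x| + |y|) ∂(μ s) ∂(μ s))
        = ∫ u in (0:ℝ)..t,
            (lam^2 * (∫ x, ∫ y, deltaF f x y * (x+y) ∂ν (lam*u) ∂ν (lam*u))
            + (lamStar^2 * (∫ x, ∫ y, deltaF f (-x) (-y) * (x+y) ∂ν (lamStar*u) ∂ν (lamStar*u))
              + (2*lam*lamStar) * ((∫ x, deriv f x ∂ν (lam*u))
                  - (∫ x, deriv f (-x) ∂ν (lamStar*u))))) := by
      apply intervalIntegral.integral_congr_ae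
      apply Eventually.of_forall
      intro u hu'
      exact hptw u (by rwa [Set.uIoc_of_le ht] at hu')
    rw [hcong,
      intervalIntegral.integral_add (hIIKA.const_mul _)
        ((hIIKB.const_mul _).add ((hIIA.sub hIIB).const_mul _)),
      intervalIntegral.integral_add (hIIKB.const_mul _) ((hIIA.sub hIIB).const_mul _),
      intervalIntegral.integral_const_mul, intervalIntegral.integral_const_mul,
      intervalIntegral.integral_const_mul, intervalIntegral.integral_sub hIIA hIIB]
  rw [E1, E2, E3, hlam, hlamStar]
  ring
end

section
/- Let m_k : [0,∞) → ℝ, k = 0,1,2,…, be locally bounded measurable functions such that m_0(t) = 1 and m_1(t) = 0 for all t ≥ 0, and for every integer k ≥ 2 and t ≥ 0, m_k(t) = (k/2) ∑_{i=0}^{k−2} ∫_0^t m_i(s) m_{k−2−i}(s) ds. Then for every n ≥ 0 and t ≥ 0: m_{2n+1}(t) = 0 and m_{2n}(t) = t^n · (1/(n+1)) · C(2n,n), where C(2n,n) is the binomial coefficient; i.e. the even moments are the Catalan numbers times t^n, the moments of the semicircle law of variance t. -/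
open MeasureTheory Filter Set

private lemma sum_double (g : ℕ → ℝ) : ∀ N : ℕ,
    ∑ i ∈ Finset.range (2 * N), g i = ∑ a ∈ Finset.range N, (g (2 * a) + g (2 * a + 1)) := by
  intro N
  induction N with
  | zero => simp
  | succ n ih =>
      have h2 : 2 * (n + 1) = 2 * n + 1 + 1 := by ring
      rw [h2, Finset.sum_range_succ, Finset.sum_range_succ, ih, Finset.sum_range_succ]
      ring

theorem stmt10 (m : ℕ → ℝ → ℝ)
    (hmeas : ∀ k, Measurable (m k))
    (hbd : ∀ k : ℕ, ∀ T > (0:ℝ), ∃ M : ℝ, ∀ t ∈ Icc (0:ℝ) T, |m k t| ≤ M)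
    (h0 : ∀ t : ℝ, 0 ≤ t → m 0 t = 1)
    (h1 : ∀ t : ℝ, 0 ≤ t → m 1 t = 0)
    (hrec : ∀ k : ℕ, 2 ≤ k → ∀ t : ℝ, 0 ≤ t →
      m k t = (k / 2 : ℝ) * ∑ i ∈ Finset.range (k - 1),
        ∫ s in (0:ℝ)..t, m i s * m (k - 2 - i) s) :
    ∀ n : ℕ, ∀ t : ℝ, 0 ≤ t →
      m (2 * n + 1) t = 0 ∧
      m (2 * n) t = t ^ n * (1 / (n + 1 : ℝ)) * (Nat.choose (2 * n) n : ℝ) := by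
  have key : ∀ k : ℕ, ∀ t : ℝ, 0 ≤ t →
      m k t = if k % 2 = 0 then t ^ (k / 2) * (catalan (k / 2) : ℝ) else 0 := by
    intro k
    induction k using Nat.strong_induction_on with
    | _ k ih =>
      match k with
      | 0 => intro t ht; simp [h0 t ht]
      | 1 => intro t ht; simp [h1 t ht]
      | (k+2) =>
        intro t ht
        rw [hrec (k+2) (by omega) t ht]
        simp only [Nat.add_sub_cancel]
        have hint : ∀ i ∈ Finset.range (k+1),
            (∫ s in (0:ℝ)..t, m i s * m (k - i) s)
            = ∫ s in (0:ℝ)..t,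
              (if i % 2 = 0 then s ^ (i / 2) * (catalan (i / 2) : ℝ) else 0) *
              (if (k - i) % 2 = 0 then s ^ ((k - i) / 2) * (catalan ((k - i) / 2) : ℝ) else 0) := by
          intro i hi
          have hik : i < k + 1 := Finset.mem_range.mp hi
          apply intervalIntegral.integral_congr
          intro s hs
          rw [Set.uIcc_of_le ht] at hs
          show m i s * m (k - i) s = _
          rw [ih i (by omega) s hs.1, ih (k - i) (by omega) s hs.1]
        have hr1 : k + 2 - 1 = k + 1 := rfl
        rw [hr1, Finset.sum_congr rfl hint]
        by_cases hk : k % 2 = 0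
        · -- even case: k = 2*n
          obtain ⟨n, rfl⟩ : ∃ n, k = 2 * n := ⟨k / 2, by omega⟩
          have hdiv : (2 * n + 2) % 2 = 0 := by omega
          rw [if_pos hdiv]
          have hJ : ∀ a ∈ Finset.range (n + 1),
              (∫ s in (0:ℝ)..t,
                (if (2*a) % 2 = 0 then s ^ ((2*a) / 2) * (catalan ((2*a) / 2) : ℝ) else 0) *
                (if (2*n - 2*a) % 2 = 0 then s ^ ((2*n - 2*a) / 2) * (catalan ((2*n - 2*a) / 2) : ℝ) else 0))
              = (catalan a * catalan (n - a)) * (t ^ (n+1) / (n+1)) := by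
            intro a ha
            have ha' : a ≤ n := by simpa using Nat.lt_succ_iff.mp (Finset.mem_range.mp ha)
            have e1 : (2*a) % 2 = 0 := by omega
            have e2 : (2*n - 2*a) % 2 = 0 := by omega
            have e3 : (2*a) / 2 = a := by omega
            have e4 : (2*n - 2*a) / 2 = n - a := by omega
            simp only [e1, e2, e3, e4, reduceIte]
            have : (fun s : ℝ => (s ^ a * (catalan a : ℝ)) * (s ^ (n-a) * (catalan (n-a) : ℝ)))
                = fun s : ℝ => ((catalan a : ℝ) * (catalan (n-a) : ℝ)) * s ^ n := by
              funext s
              have hpow : s ^ a * s ^ (n - a) = s ^ n := by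
                rw [← pow_add]; congr 1; omega
              rw [← hpow]; ring
            rw [this, intervalIntegral.integral_const_mul, integral_pow]
            push_cast
            ring
          have hodd : ∀ a : ℕ,
              (∫ s in (0:ℝ)..t,
                (if (2*a+1) % 2 = 0 then s ^ ((2*a+1) / 2) * (catalan ((2*a+1) / 2) : ℝ) else 0) *
                (if (2*n - (2*a+1)) % 2 = 0 then s ^ ((2*n - (2*a+1)) / 2) * (catalan ((2*n - (2*a+1)) / 2) : ℝ) else 0))
              = 0 := by
            intro a
            have : (2*a+1) % 2 ≠ 0 := by omega
            simp [this]
          -- sum over range (2n+1) = sum over range (2n+2) minus last term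
          have hsum : ∑ i ∈ Finset.range (2*n+1),
              (∫ s in (0:ℝ)..t,
                (if i % 2 = 0 then s ^ (i / 2) * (catalan (i / 2) : ℝ) else 0) *
                (if (2*n - i) % 2 = 0 then s ^ ((2*n - i) / 2) * (catalan ((2*n - i) / 2) : ℝ) else 0))
              = (catalan (n+1) : ℝ) * (t ^ (n+1) / (n+1)) := by
            set g : ℕ → ℝ := fun i => ∫ s in (0:ℝ)..t,
                (if i % 2 = 0 then s ^ (i / 2) * (catalan (i / 2) : ℝ) else 0) *
                (if (2*n - i) % 2 = 0 then s ^ ((2*n - i) / 2) * (catalan ((2*n - i) / 2) : ℝ) else 0)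
              with hg
            have hgodd : ∀ a : ℕ, g (2*a+1) = 0 := by
              intro a; simp only [hg]; exact hodd a
            have hgeven : ∀ a ∈ Finset.range (n+1),
                g (2*a) = ((catalan a : ℝ) * (catalan (n-a) : ℝ)) * (t ^ (n+1) / ((n:ℝ)+1)) := by
              intro a ha; simp only [hg]; exact hJ a ha
            have h1 : ∑ i ∈ Finset.range (2*n+1), g i = ∑ i ∈ Finset.range (2*(n+1)), g i := by
              conv_rhs => rw [show 2*(n+1) = (2*n+1)+1 by ring, Finset.sum_range_succ]
              rw [hgodd n, add_zero]
            rw [h1, sum_double]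
            rw [Finset.sum_congr rfl (fun a ha => by rw [hgeven a ha, hgodd a, add_zero])]
            rw [← Finset.sum_mul]
            have h3 : ∑ a ∈ Finset.range (n+1), (catalan a * catalan (n-a) : ℝ)
                = (catalan (n+1) : ℝ) := by
              rw [catalan_succ]
              push_cast [Finset.sum_range]
              rfl
            rw [h3]
          rw [hsum]
          have hn : ((2*n+2 : ℕ) : ℝ) / 2 = (n : ℝ) + 1 := by push_cast; ring
          have hd : (2*n+2) / 2 = n + 1 := by omega
          rw [hn, hd]
          have hne : ((n:ℝ) + 1) ≠ 0 := by positivity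
          field_simp
        · -- odd case
          have hk2 : (k + 2) % 2 ≠ 0 := by omega
          rw [if_neg hk2]
          have hz : ∀ i ∈ Finset.range (k+1),
              (∫ s in (0:ℝ)..t,
                (if i % 2 = 0 then s ^ (i / 2) * (catalan (i / 2) : ℝ) else 0) *
                (if (k - i) % 2 = 0 then s ^ ((k - i) / 2) * (catalan ((k - i) / 2) : ℝ) else 0))
              = 0 := by
            intro i hi
            have hi' : i ≤ k := Nat.lt_succ_iff.mp (Finset.mem_range.mp hi)
            by_cases hie : i % 2 = 0
            · have : (k - i) % 2 ≠ 0 := by omega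
              simp [this]
            · simp [hie]
          rw [Finset.sum_congr rfl hz]
          simp
  intro n t ht
  constructor
  · have := key (2*n+1) t ht
    have h2 : (2*n+1) % 2 ≠ 0 := by omega
    rw [if_neg h2] at this
    exact this
  · have := key (2*n) t ht
    have h2 : (2*n) % 2 = 0 := by omega
    have h3 : (2*n) / 2 = n := by omega
    rw [if_pos h2, h3] at this
    rw [this]
    have hc : ((n+1) * catalan n : ℕ) = Nat.choose (2*n) n := by
      rw [succ_mul_catalan_eq_centralBinom]
      rfl
    have hc' : ((n:ℝ)+1) * (catalan n : ℝ) = (Nat.choose (2*n) n : ℝ) := by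
      exact_mod_cast congrArg (Nat.cast : ℕ → ℝ) hc
    have hne : ((n:ℝ) + 1) ≠ 0 := by positivity
    field_simp
    rw [← hc']
    ring
end
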